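/- arXiv:1203.4419 — 2 statements merged into one kernel-verified Lean document; each statement's English description precedes it below -/
import Mathlib

section
/- For all m ≥ 0 and r ≥ 1 with r > m, f_{m+r+1,r} = 0; that is, there is no Ferrers diagram λ ⊆ ℕ^r with m + r + 1 elements containing μ_r such that every component of the skew diagram λ ∖ μ_r contains an element that is not of type 1, when m < r. -/
/-- A Ferrers diagram in `ℕ^k`: a finite nonempty downward-closed subset of `Fin k → ℕ`. -/
def IsFerrers {k : ℕ} (F : Finset (Fin k → ℕ)) : Prop :=
  F.Nonempty ∧ ∀ a ∈ F, ∀ x : Fin k → ℕ, (∀ i, x i ≤ a i) → x ∈ F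

/-- A Ferrers diagram is strict if every coordinate is used by some element. -/
def IsStrict {k : ℕ} (F : Finset (Fin k → ℕ)) : Prop :=
  ∀ i : Fin k, ∃ a ∈ F, a i ≠ 0

/-- `numPart d n` = `p_d(n)`, the number of Ferrers diagrams in `ℕ^(d+1)` with `n` elements. -/
noncomputable def numPart (d n : ℕ) : ℕ :=
  Nat.card {F : Finset (Fin (d + 1) → ℕ) // IsFerrers F ∧ F.card = n}

/-- `Amat n r` = `a_{n,r}`, the number of strict Ferrers diagrams in `ℕ^r` with `n` elements. -/
noncomputable def Amat (n r : ℕ) : ℕ :=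
  Nat.card {F : Finset (Fin r → ℕ) // IsFerrers F ∧ IsStrict F ∧ F.card = n}

/-- `mu r` = `μ_r = {0, e_1, …, e_r} ⊆ ℕ^r`. -/
def mu (r : ℕ) : Finset (Fin r → ℕ) :=
  insert 0 (Finset.univ.image fun i => Pi.single i 1)

/-- The reduced dimension of a Ferrers diagram `F ⊆ ℕ^x` (containing `μ_x`): the number of
coordinates used by some element of `F \ μ_x`. -/
noncomputable def rdim {x : ℕ} (F : Finset (Fin x → ℕ)) : ℕ :=
  Nat.card {i : Fin x // ∃ a ∈ F \ mu x, a i ≠ 0}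

/-- Two coordinates are touched by a common element of the skew diagram `σ`. -/
def Touches {x : ℕ} (σ : Finset (Fin x → ℕ)) (i j : Fin x) : Prop :=
  ∃ a ∈ σ, a i ≠ 0 ∧ a j ≠ 0

/-- `B` is a block of the finest partition of `Fin x` compatible with `σ`,
i.e. an equivalence class of the equivalence relation generated by `Touches σ`. -/
def IsBlock {x : ℕ} (σ : Finset (Fin x → ℕ)) (B : Set (Fin x)) : Prop :=
  ∃ i : Fin x, B = {j | Relation.EqvGen (Touches σ) i j}

/-- The support of `a` is contained in `B`. -/
def SuppIn {x : ℕ} (a : Fin x → ℕ) (B : Set (Fin x)) : Prop :=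
  ∀ i, a i ≠ 0 → i ∈ B

/-- The component of `σ` with block `B` is of type `σ₂`: `B = {i, j}` with `i ≠ j`, and the
elements of `σ` supported in `B` are exactly `{e_i + e_j}`. -/
def IsSigma2 {x : ℕ} (σ : Finset (Fin x → ℕ)) (B : Set (Fin x)) : Prop :=
  ∃ i j : Fin x, i ≠ j ∧ B = {i, j} ∧
    {a ∈ (σ : Set (Fin x → ℕ)) | SuppIn a B} = {Pi.single i 1 + Pi.single j 1}

/-- `Cmat m x` = `c_{m,x}`. -/
noncomputable def Cmat (m x : ℕ) : ℕ :=
  Nat.card {F : Finset (Fin x → ℕ) //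
    IsFerrers F ∧ mu x ⊆ F ∧ F.card = m + x + 1 ∧ rdim F = x}

/-- `Dmat m x` = `d_{m,x}`. -/
noncomputable def Dmat (m x : ℕ) : ℕ :=
  Nat.card {F : Finset (Fin x → ℕ) //
    IsFerrers F ∧ mu x ⊆ F ∧ F.card = m + x + 1 ∧ rdim F = x ∧
      ∀ B : Set (Fin x), IsBlock (F \ mu x) B → ¬ IsSigma2 (F \ mu x) B}

/-- A point of type 1: `e_i + e_j` for some `i ≠ j`. -/
def IsType1 {r : ℕ} (a : Fin r → ℕ) : Prop :=
  ∃ i j : Fin r, i ≠ j ∧ a = Pi.single i 1 + Pi.single j 1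

/-- A point of type 2: `2·e_i` for some `i`. -/
def IsType2 {r : ℕ} (a : Fin r → ℕ) : Prop :=
  ∃ i : Fin r, a = Pi.single i 2

/-- `Fmat n r` = `f_{n,r}`. -/
noncomputable def Fmat (n r : ℕ) : ℕ :=
  Nat.card {F : Finset (Fin r → ℕ) //
    IsFerrers F ∧ mu r ⊆ F ∧ F.card = n ∧
      ∀ B : Set (Fin r), IsBlock (F \ mu r) B →
        ∃ a ∈ F \ mu r, SuppIn a B ∧ ¬ IsType1 a}

namespace S13

attribute [local instance] Classical.propDecidable

variable {r : ℕ}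

/-- the graph of type-1 points of σ -/
def G (σ : Finset (Fin r → ℕ)) : SimpleGraph (Fin r) where
  Adj i j := i ≠ j ∧ Pi.single i 1 + Pi.single j 1 ∈ σ
  symm := by
    constructor
    intro i j ⟨h1, h2⟩
    exact ⟨h1.symm, by rwa [add_comm]⟩
  loopless := by constructor; intro i ⟨h1, _⟩; exact h1 rfl

lemma adj_touches {σ : Finset (Fin r → ℕ)} {i j : Fin r} (h : (G σ).Adj i j) :
    Touches σ i j := by
  refine ⟨_, h.2, ?_, ?_⟩ <;>
    simp [Pi.single_apply, h.1.symm, Ne.symm h.1]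

def Bk (σ : Finset (Fin r → ℕ)) (i : Fin r) : Set (Fin r) :=
  {j | Relation.EqvGen (Touches σ) i j}

noncomputable def wt (σ : Finset (Fin r → ℕ)) (B : Set (Fin r)) : Fin r → ℕ :=
  if h : ∃ a ∈ σ, SuppIn a B ∧ ¬ IsType1 a then h.choose else 0

lemma wt_spec {σ : Finset (Fin r → ℕ)} {B : Set (Fin r)}
    (h : ∃ a ∈ σ, SuppIn a B ∧ ¬ IsType1 a) :
    wt σ B ∈ σ ∧ SuppIn (wt σ B) B ∧ ¬ IsType1 (wt σ B) := by
  rw [wt, dif_pos h]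
  exact h.choose_spec

noncomputable def rt (σ : Finset (Fin r → ℕ)) (B : Set (Fin r)) (i₀ : Fin r) : Fin r :=
  if h : ∃ k ∈ B, wt σ B k ≠ 0 then h.choose else i₀

lemma rt_spec {σ : Finset (Fin r → ℕ)} {B : Set (Fin r)} {i₀ : Fin r}
    (h : ∃ k ∈ B, wt σ B k ≠ 0) :
    rt σ B i₀ ∈ B ∧ wt σ B (rt σ B i₀) ≠ 0 := by
  rw [rt, dif_pos h]
  exact h.choose_spec

lemma rt_irrel {σ : Finset (Fin r → ℕ)} {B : Set (Fin r)} (i₀ i₁ : Fin r)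
    (h : ∃ k ∈ B, wt σ B k ≠ 0) :
    rt σ B i₀ = rt σ B i₁ := by
  rw [rt, rt, dif_pos h, dif_pos h]

noncomputable def emb (σ : Finset (Fin r → ℕ)) (i : Fin r) : Fin r → ℕ :=
  if rt σ (Bk σ i) i = i then wt σ (Bk σ i)
  else if h : ∃ j, (G σ).Adj j i ∧
      (G σ).dist (rt σ (Bk σ i) i) j < (G σ).dist (rt σ (Bk σ i) i) i
    then Pi.single h.choose 1 + Pi.single i 1
    else 0

lemma exists_parent {V : Type*} {G : SimpleGraph V} {u v : V}
    (h : G.Reachable u v) (hne : u ≠ v) :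
    ∃ j, G.Adj j v ∧ G.dist u j < G.dist u v := by
  obtain ⟨p, hp⟩ := h.exists_walk_length_eq_dist
  obtain ⟨x, hadj, q, hq⟩ := SimpleGraph.Walk.exists_eq_cons_of_ne hne.symm p.reverse
  refine ⟨x, hadj.symm, ?_⟩
  have h1 : G.dist u x ≤ q.reverse.length := SimpleGraph.dist_le _
  have h2 : q.length + 1 = p.length := by
    have := congrArg SimpleGraph.Walk.length hq
    simpa using this.symm
  rw [SimpleGraph.Walk.length_reverse] at h1
  omega

lemma key {σ : Finset (Fin r → ℕ)}
    (hσ0 : (0 : Fin r → ℕ) ∉ σ)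
    (hpair : ∀ a ∈ σ, ∀ i j : Fin r, i ≠ j → a i ≠ 0 → a j ≠ 0 →
      Pi.single i 1 + Pi.single j 1 ∈ σ)
    (hwit : ∀ i : Fin r, ∃ a ∈ σ, SuppIn a (Bk σ i) ∧ ¬ IsType1 a) :
    r ≤ σ.card := by
  classical
  -- touches gives adjacency
  have touches_adj : ∀ i j : Fin r, i ≠ j → Touches σ i j → (G σ).Adj i j := by
    rintro i j hne ⟨a, ha, hi, hj⟩
    exact ⟨hne, hpair a ha i j hne hi hj⟩
  have eqv_reach : ∀ i j : Fin r, Relation.EqvGen (Touches σ) i j → (G σ).Reachable i j := by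
    intro i j h
    induction h with
    | rel a b hab =>
        by_cases hab' : a = b
        · subst hab'; exact SimpleGraph.Reachable.refl _
        · exact (touches_adj a b hab' hab).reachable
    | refl a => exact SimpleGraph.Reachable.refl _
    | symm a b _ ih => exact ih.symm
    | trans a b c _ _ ih1 ih2 => exact ih1.trans ih2
  have hBkeq : ∀ i j : Fin r, Relation.EqvGen (Touches σ) i j → Bk σ i = Bk σ j := by
    intro i j hij
    ext k
    constructor
    · intro hik; exact (Relation.EqvGen.symm _ _ hij).trans _ _ _ hik
    · intro hjk; exact hij.trans _ _ _ hjk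
  -- per-coordinate data
  have hexrt : ∀ i : Fin r, ∃ k ∈ Bk σ i, wt σ (Bk σ i) k ≠ 0 := by
    intro i
    obtain ⟨hw1, hw2, _⟩ := wt_spec (hwit i)
    have hne : wt σ (Bk σ i) ≠ 0 := fun h0 => hσ0 (h0 ▸ hw1)
    obtain ⟨k, hk⟩ := Function.ne_iff.mp hne
    exact ⟨k, hw2 k (by simpa using hk), by simpa using hk⟩
  have hrtmem : ∀ i : Fin r, rt σ (Bk σ i) i ∈ Bk σ i := fun i => (rt_spec (hexrt i)).1
  -- the existential in the non-root branch of `emb` holds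
  have hexpar : ∀ i : Fin r, rt σ (Bk σ i) i ≠ i →
      ∃ j, (G σ).Adj j i ∧
        (G σ).dist (rt σ (Bk σ i) i) j < (G σ).dist (rt σ (Bk σ i) i) i := by
    intro i hne
    exact exists_parent ((eqv_reach i _ (hrtmem i)).symm) hne
  -- membership
  have hmem : ∀ i : Fin r, emb σ i ∈ σ := by
    intro i
    by_cases hroot : rt σ (Bk σ i) i = i
    · rw [emb, if_pos hroot]
      exact (wt_spec (hwit i)).1
    · rw [emb, if_neg hroot, dif_pos (hexpar i hroot)]
      exact (hexpar i hroot).choose_spec.1.2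
  -- same-block roots agree
  have hsame : ∀ i i' : Fin r, Relation.EqvGen (Touches σ) i i' →
      rt σ (Bk σ i) i = rt σ (Bk σ i') i' := by
    intro i i' hii
    have hB := hBkeq i i' hii
    rw [hB]
    exact rt_irrel i i' (hexrt i')
  -- injectivity
  have hinj : Function.Injective (emb σ) := by
    intro i i' heq
    by_cases h1 : rt σ (Bk σ i) i = i <;> by_cases h2 : rt σ (Bk σ i') i' = i'
    · -- both roots
      rw [emb, if_pos h1, emb, if_pos h2] at heq
      obtain ⟨_, hw2, _⟩ := wt_spec (hwit i)
      obtain ⟨k, hk1, hk2⟩ := hexrt i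
      have hk' : k ∈ Bk σ i' := by
        have : wt σ (Bk σ i') k ≠ 0 := by rwa [← heq]
        exact (wt_spec (hwit i')).2.1 k this
      have hii : Relation.EqvGen (Touches σ) i i' :=
        (hk1.trans _ _ _ (Relation.EqvGen.symm _ _ hk'))
      calc i = rt σ (Bk σ i) i := h1.symm
        _ = rt σ (Bk σ i') i' := hsame i i' hii
        _ = i' := h2
    · -- i root, i' not: contradiction, wt not type1 but RHS type1
      rw [emb, if_pos h1, emb, if_neg h2, dif_pos (hexpar i' h2)] at heq
      obtain ⟨_, _, hnt1⟩ := wt_spec (hwit i)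
      obtain ⟨⟨hjne, _⟩, _⟩ := (hexpar i' h2).choose_spec
      exact absurd ⟨_, i', hjne, heq⟩ hnt1
    · rw [emb, if_neg h1, dif_pos (hexpar i h1), emb, if_pos h2] at heq
      obtain ⟨_, _, hnt1⟩ := wt_spec (hwit i')
      obtain ⟨⟨hjne, _⟩, _⟩ := (hexpar i h1).choose_spec
      exact absurd ⟨_, i, hjne, heq.symm⟩ hnt1
    · -- both non-roots
      rw [emb, if_neg h1, dif_pos (hexpar i h1), emb, if_neg h2,
        dif_pos (hexpar i' h2)] at heq
      obtain ⟨⟨hjne, hjmem⟩, hjd⟩ := (hexpar i h1).choose_spec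
      obtain ⟨⟨hjne', _⟩, hjd'⟩ := (hexpar i' h2).choose_spec
      by_contra hne
      have hj'i : (hexpar i' h2).choose = i := by
        by_contra hc
        have e1 := congrFun heq i
        have h3 : ¬ i = (hexpar i h1).choose := fun h => hjne h.symm
        have h4 : ¬ i = (hexpar i' h2).choose := fun h => hc h.symm
        simp [Pi.single_apply, h3, h4, hne] at e1
      have hji' : (hexpar i h1).choose = i' := by
        by_contra hc
        have e2 := congrFun heq i'
        have h3 : ¬ i' = (hexpar i h1).choose := fun h => hc h.symm
        have h4 : ¬ i' = (hexpar i' h2).choose := fun h => hjne' h.symm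
        have h5 : ¬ i' = i := fun h => hne h.symm
        simp [Pi.single_apply, h3, h4, h5] at e2
      have hadj : (G σ).Adj i' i := hji' ▸ (hexpar i h1).choose_spec.1
      have hii : Relation.EqvGen (Touches σ) i i' :=
        Relation.EqvGen.rel _ _ (adj_touches hadj.symm)
      have hρ : rt σ (Bk σ i) i = rt σ (Bk σ i') i' := hsame i i' hii
      rw [hji'] at hjd
      rw [hj'i, ← hρ] at hjd'
      omega
  calc r = (Finset.univ : Finset (Fin r)).card := by simp
    _ ≤ σ.card := Finset.card_le_card_of_injOn (emb σ)
        (fun i _ => hmem i) (hinj.injOn)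

end S13

/-- `f_{m+r+1,r} = 0` whenever `r ≥ 1` and `m < r`. -/


theorem statement13 (m r : ℕ) (hr : 1 ≤ r) (h : m < r) : Fmat (m + r + 1) r = 0 := by
  have hempty : IsEmpty {F : Finset (Fin r → ℕ) //
      IsFerrers F ∧ mu r ⊆ F ∧ F.card = m + r + 1 ∧
        ∀ B : Set (Fin r), IsBlock (F \ mu r) B →
          ∃ a ∈ F \ mu r, SuppIn a B ∧ ¬ IsType1 a} := by
    constructor
    rintro ⟨F, hferr, hmu, hcard, hblocks⟩
    have hσ0 : (0 : Fin r → ℕ) ∉ F \ mu r := by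
      simp [Finset.mem_sdiff, mu]
    have hpair : ∀ a ∈ F \ mu r, ∀ i j : Fin r, i ≠ j → a i ≠ 0 → a j ≠ 0 →
        Pi.single i 1 + Pi.single j 1 ∈ F \ mu r := by
      intro a ha i j hij hi hj
      rw [Finset.mem_sdiff] at ha ⊢
      constructor
      · apply hferr.2 a ha.1
        intro k
        simp only [Pi.add_apply, Pi.single_apply]
        split_ifs with h1 h2 h2
        · subst h1; exact absurd h2 hij
        · subst h1; have := hi; omega
        · subst h2; have := hj; omega
        · omega
      · intro hmem
        rw [mu, Finset.mem_insert] at hmem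
        rcases hmem with h0 | himg
        · have := congrFun h0.symm i
          simp [Pi.single_apply, Ne.symm hij] at this
        · simp only [Finset.mem_image] at himg
          obtain ⟨k, _, hk⟩ := himg
          have h1 := congrFun hk i
          have h2 := congrFun hk j
          simp only [Pi.add_apply, Pi.single_apply, eq_self_iff_true, if_true] at h1 h2
          rw [if_neg hij] at h1
          rw [if_neg (Ne.symm hij)] at h2
          have hik : i = k := by
            by_contra hc; rw [if_neg hc] at h1; omega
          have hjk : j = k := by
            by_contra hc; rw [if_neg hc] at h2; omega
          exact hij (hik.trans hjk.symm)
    have hwit : ∀ i : Fin r, ∃ a ∈ F \ mu r, SuppIn a (S13.Bk (F \ mu r) i) ∧ ¬ IsType1 a :=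
      fun i => hblocks _ ⟨i, rfl⟩
    have hkey := S13.key hσ0 hpair hwit
    have hinj : Function.Injective (fun i : Fin r => (Pi.single i 1 : Fin r → ℕ)) := by
      intro i j hij
      by_contra hc
      have := congrFun hij j
      simp only at this
      rw [Pi.single_eq_same, Pi.single_eq_of_ne (fun hh => hc hh.symm)] at this
      exact absurd this (by omega)
    have h0img : (0 : Fin r → ℕ) ∉ Finset.univ.image
        (fun i => (Pi.single i 1 : Fin r → ℕ)) := by
      simp only [Finset.mem_image]
      rintro ⟨i, -, hi⟩
      have := congrFun hi i
      simp [Pi.single_apply] at this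
    have hmucard : (mu r).card = r + 1 := by
      rw [mu, Finset.card_insert_of_notMem h0img,
        Finset.card_image_of_injective _ hinj, Finset.card_univ, Fintype.card_fin]
    have hσcard : (F \ mu r).card = m := by
      rw [Finset.card_sdiff_of_subset hmu, hcard, hmucard]
      omega
    omega
  exact Nat.card_of_isEmpty
end

section
/- For every m ≥ 1 and every α with 1 ≤ α ≤ m, the number of Ferrers diagrams λ ⊆ ℕ^m with exactly 2m + 1 elements that contain μ_m, such that every component of λ ∖ μ_m contains an element that is not of type 1, and such that λ ∖ μ_m contains exactly α elements of type 2, equals C(m−1, α−1) · m^(m−α). -/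

instance {r : ℕ} : DecidablePred (IsType1 (r := r)) := fun a =>
  decidable_of_iff (∃ i j : Fin r, i ≠ j ∧ a = Pi.single i 1 + Pi.single j 1) Iff.rfl

instance {r : ℕ} : DecidablePred (IsType2 (r := r)) := fun a =>
  decidable_of_iff (∃ i : Fin r, a = Pi.single i 2) Iff.rfl


open Function Finset

section evfix
variable {n : ℕ}

def EvFix (f : Fin n → Fin n) : Prop := ∀ i, ∃ k, f^[k+1] i = f^[k] i

lemma stab_from (f : Fin n → Fin n) (i : Fin n) {k : ℕ} (hk : f^[k+1] i = f^[k] i)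
    {t : ℕ} (ht : k ≤ t) : f^[t] i = f^[k] i := by
  induction t with
  | zero => have hk0 : k = 0 := by omega
            subst hk0; rfl
  | succ t ih =>
    rcases Nat.eq_or_lt_of_le ht with h | h
    · rw [← h]
    · have ht' : k ≤ t := by omega
      rw [Function.iterate_succ_apply', ih ht', ← Function.iterate_succ_apply' f k i, hk]

lemma periodic_fixed (f : Fin n → Fin n) (i : Fin n) (h : ∃ k, f^[k+1] i = f^[k] i)
    {a d : ℕ} (hd : 0 < d) (hp : f^[a + d] i = f^[a] i) : f (f^[a] i) = f^[a] i := by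
  obtain ⟨k, hk⟩ := h
  have hper : ∀ s, f^[a + d * s] i = f^[a] i := by
    intro s
    induction s with
    | zero => simp
    | succ s ih =>
      have : a + d * (s+1) = d + (a + d * s) := by ring
      rw [this, Function.iterate_add_apply, ih, ← Function.iterate_add_apply,
        Nat.add_comm d a, hp]
  have hge : k ≤ a + d * k := by nlinarith
  have h1 : f^[a] i = f^[k] i := by
    rw [← hper k, stab_from f i hk hge]
  rw [h1, ← Function.iterate_succ_apply' f k i, hk]

lemma rho_fixed {f : Fin n → Fin n} (hf : EvFix f) (i : Fin n) :
    f (f^[n] i) = f^[n] i := by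
  have hcard : Fintype.card (Fin n) < Fintype.card (Fin (n+1)) := by simp
  obtain ⟨x, y, hxy, hfxy⟩ := Fintype.exists_ne_map_eq_of_card_lt
    (fun t : Fin (n+1) => f^[(t : ℕ)] i) hcard
  wlog hlt : (x : ℕ) < (y : ℕ) generalizing x y
  · exact this y x hxy.symm hfxy.symm (by omega; )
  · have hfix : f (f^[(x:ℕ)] i) = f^[(x:ℕ)] i := by
      refine periodic_fixed f i (hf i) (d := (y:ℕ) - (x:ℕ)) (by omega) ?_
      rw [show (x:ℕ) + ((y:ℕ) - (x:ℕ)) = (y:ℕ) by omega]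
      exact hfxy.symm
    have hx : f^[(x:ℕ)+1] i = f^[(x:ℕ)] i := by
      rw [Function.iterate_succ_apply', hfix]
    have : f^[n] i = f^[(x:ℕ)] i := stab_from f i hx (by omega)
    rw [this, hfix]

def rho (f : Fin n → Fin n) (i : Fin n) : Fin n := f^[n] i

lemma rho_fix {f : Fin n → Fin n} (hf : EvFix f) (i : Fin n) : f (rho f i) = rho f i :=
  rho_fixed hf i

lemma rho_f {f : Fin n → Fin n} (hf : EvFix f) (i : Fin n) : rho f (f i) = rho f i := by
  unfold rho
  rw [← Function.iterate_succ_apply, Function.iterate_succ_apply', rho_fixed hf i]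

lemma rho_iterate {f : Fin n → Fin n} (hf : EvFix f) (i : Fin n) (t : ℕ) :
    rho f (f^[t] i) = rho f i := by
  induction t with
  | zero => rfl
  | succ t ih => rw [Function.iterate_succ_apply', rho_f hf, ih]

lemma rho_of_fixed {f : Fin n → Fin n} {i : Fin n} (h : f i = i) : rho f i = i :=
  Function.iterate_fixed h n

lemma rho_eq_self_iff {f : Fin n → Fin n} (hf : EvFix f) {i : Fin n} :
    rho f i = i ↔ f i = i := by
  constructor
  · intro h
    have h2 := rho_fix hf i
    rwa [h] at h2
  · exact rho_of_fixed

lemma rho_rho {f : Fin n → Fin n} (hf : EvFix f) (i : Fin n) : rho f (rho f i) = rho f i :=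
  rho_of_fixed (rho_fix hf i)

lemma orbit_reaches {f : Fin n → Fin n} (hf : EvFix f) {i r : Fin n} {t : ℕ}
    (ht : f^[t] i = r) (hr : f r = r) : rho f i = r := by
  rw [← rho_iterate hf i t, ht, rho_of_fixed hr]

def hgt (f : Fin n → Fin n) (i : Fin n) : ℕ := Nat.find (⟨n, rfl⟩ : ∃ t, f^[t] i = rho f i)

lemma hgt_spec (f : Fin n → Fin n) (i : Fin n) : f^[hgt f i] i = rho f i :=
  Nat.find_spec (⟨n, rfl⟩ : ∃ t, f^[t] i = rho f i)

lemma hgt_zero_iff {f : Fin n → Fin n} {i : Fin n} : hgt f i = 0 ↔ i = rho f i := by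
  unfold hgt
  rw [Nat.find_eq_zero]
  exact Iff.rfl

lemma hgt_succ {f : Fin n → Fin n} (hf : EvFix f) {i : Fin n} (hi : f i ≠ i) :
    hgt f i = hgt f (f i) + 1 := by
  have h1 : hgt f i ≤ hgt f (f i) + 1 := by
    apply Nat.find_le
    rw [Function.iterate_succ_apply]
    rw [← rho_f hf i]
    exact hgt_spec f (f i)
  have h0 : hgt f i ≠ 0 := by
    intro h
    rw [hgt_zero_iff] at h
    exact hi ((rho_eq_self_iff hf).mp h.symm)
  have h2 : hgt f (f i) ≤ hgt f i - 1 := by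
    apply Nat.find_le
    rw [rho_f hf]
    have h3 : f^[hgt f i] i = rho f i := hgt_spec f i
    rw [show hgt f i = hgt f i - 1 + 1 by omega, Function.iterate_succ_apply] at h3
    exact h3
  omega

def Fx (f : Fin n → Fin n) : Finset (Fin n) := Finset.univ.filter fun i => f i = i

@[simp] lemma mem_Fx {f : Fin n → Fin n} {i : Fin n} : i ∈ Fx f ↔ f i = i := by
  simp [Fx]

lemma rho_mem_Fx {f : Fin n → Fin n} (hf : EvFix f) (i : Fin n) : rho f i ∈ Fx f := by
  simp [rho_fix hf i]

end evfix

section update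
variable {n : ℕ}

lemma iterate_agree {f g : Fin n → Fin n} {r : Fin n} (h : ∀ x, x ≠ r → g x = f x)
    (i : Fin n) (t : ℕ) (havoid : ∀ s, s < t → f^[s] i ≠ r) : g^[t] i = f^[t] i := by
  induction t with
  | zero => rfl
  | succ t ih =>
    rw [Function.iterate_succ_apply', Function.iterate_succ_apply',
      ih (fun s hs => havoid s (by omega)), h _ (havoid t (by omega))]

/-- if the `f`-orbit of `i` avoids `r` entirely, then `g`-orbit agrees forever. -/
lemma iterate_agree' {f g : Fin n → Fin n} {r : Fin n} (h : ∀ x, x ≠ r → g x = f x)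
    (i : Fin n) (havoid : ∀ s, f^[s] i ≠ r) (t : ℕ) : g^[t] i = f^[t] i :=
  iterate_agree h i t (fun s _ => havoid s)

lemma evfix_point_of_fixed {g : Fin n → Fin n} {i p : Fin n} {t : ℕ}
    (ht : g^[t] i = p) (hp : g p = p) : ∃ k, g^[k+1] i = g^[k] i :=
  ⟨t, by rw [Function.iterate_succ_apply', ht, hp, ← ht]⟩

lemma orbit_avoids_of_rho_ne {f : Fin n → Fin n} (hf : EvFix f) {u r : Fin n}
    (hr : f r = r) (hne : rho f u ≠ r) : ∀ s, f^[s] u ≠ r := by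
  intro s hs
  exact hne (orbit_reaches hf hs hr)

lemma update_evfix {f : Fin n → Fin n} (hf : EvFix f) {r u : Fin n}
    (hr : f r = r) (hne : rho f u ≠ r) : EvFix (Function.update f r u) := by
  set g := Function.update f r u with hg
  have hagree : ∀ x, x ≠ r → g x = f x := fun x hx => Function.update_of_ne hx u f
  have hune : u ≠ r := by
    intro h
    subst h
    exact hne (rho_of_fixed hr)
  -- orbit of u avoids r, so g stabilizes on it
  have huav : ∀ s, f^[s] u ≠ r := orbit_avoids_of_rho_ne hf hr hne
  have hu : ∀ t, g^[t] u = f^[t] u := iterate_agree' hagree u huav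
  have hgu : ∃ k, g^[k+1] u = g^[k] u := by
    refine evfix_point_of_fixed (t := n) (p := rho f u) (hu n) ?_
    rw [hagree _ hne]
    exact rho_fix hf u
  intro i
  by_cases hhit : ∃ s, f^[s] i = r
  · have hts : f^[Nat.find hhit] i = r := Nat.find_spec hhit
    have htav : ∀ s, s < Nat.find hhit → f^[s] i ≠ r := fun s hs => Nat.find_min hhit hs
    have h1 : g^[Nat.find hhit] i = r := by
      rw [iterate_agree hagree i _ htav]; exact hts
    have h2 : g^[Nat.find hhit + 1] i = u := by
      rw [Function.iterate_succ_apply', h1]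
      simp [hg]
    obtain ⟨k, hk⟩ := hgu
    refine ⟨Nat.find hhit + 1 + k, ?_⟩
    have h3 : ∀ s, g^[Nat.find hhit + 1 + s] i = g^[s] u := by
      intro s
      rw [Nat.add_comm (Nat.find hhit + 1) s, Function.iterate_add_apply, h2]
    rw [show Nat.find hhit + 1 + k + 1 = Nat.find hhit + 1 + (k+1) by omega, h3, h3, hk]
  · push_neg at hhit
    have hi : ∀ t, g^[t] i = f^[t] i := iterate_agree' hagree i hhit
    refine evfix_point_of_fixed (t := n) (p := f^[n] i) (hi n) ?_
    rw [hagree _ (hhit n)]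
    exact rho_fixed hf i

lemma update_Fx {f : Fin n → Fin n} {r u : Fin n} (hr : f r = r) (hune : u ≠ r) :
    Fx (Function.update f r u) = (Fx f).erase r := by
  ext i
  by_cases hi : i = r
  · subst hi
    simp [Function.update_self, hune]
  · simp [Function.update_of_ne hi, hi]

lemma update_evfix' {g : Fin n → Fin n} (hg : EvFix g) (c : Fin n) :
    EvFix (Function.update g c c) := by
  set f := Function.update g c c with hf
  have hagree : ∀ x, x ≠ c → f x = g x := fun x hx => Function.update_of_ne hx c g
  have hc : f c = c := Function.update_self c c g
  intro i
  by_cases hhit : ∃ s, g^[s] i = c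
  · have h1 : f^[Nat.find hhit] i = c := by
      rw [iterate_agree hagree i _ (fun l hl => Nat.find_min hhit hl)]
      exact Nat.find_spec hhit
    exact evfix_point_of_fixed h1 hc
  · push_neg at hhit
    have hi : ∀ t, f^[t] i = g^[t] i := iterate_agree' hagree i hhit
    refine evfix_point_of_fixed (t := n) (p := g^[n] i) (hi n) ?_
    rw [hagree _ (hhit n)]
    exact rho_fixed hg i

lemma update_Fx' {g : Fin n → Fin n} {c : Fin n} :
    Fx (Function.update g c c) = insert c (Fx g) := by
  ext i
  by_cases hi : i = c
  · subst hi; simp [Function.update_self]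
  · simp [Function.update_of_ne hi, hi]

lemma update_rho_ne {g : Fin n → Fin n} (hg : EvFix g) {c : Fin n} (hc : g c ≠ c) :
    rho (Function.update g c c) (g c) ≠ c := by
  set f := Function.update g c c with hf
  have hagree : ∀ x, x ≠ c → f x = g x := fun x hx => Function.update_of_ne hx c g
  have key : ∀ s, f^[s] (g c) = g^[s] (g c) ∧ g^[s] (g c) ≠ c := by
    intro s
    induction s using Nat.strong_induction_on with
    | _ s ih =>
      have hagr : f^[s] (g c) = g^[s] (g c) :=
        iterate_agree hagree (g c) s (fun l hl => (ih l hl).2)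
      refine ⟨hagr, ?_⟩
      intro hs
      have h2 : g^[s+1] c = c := by rw [Function.iterate_succ_apply, hs]
      have h3 := periodic_fixed g c (hg c) (a := 0) (d := s+1) (by omega) (by simpa using h2)
      simp at h3
      exact hc h3
  have hrho : rho f (g c) = f^[n] (g c) := rfl
  rw [hrho, (key n).1]
  exact (key n).2

end update

section count
variable (n k : ℕ)

abbrev SkT : Type := {f : Fin n → Fin n // EvFix f ∧ (Fx f).card = k}

abbrev T1 : Type := {p : (Fin n → Fin n) × Fin n × Fin n //
  (EvFix p.1 ∧ (Fx p.1).card = k+1) ∧ p.2.1 ∈ Fx p.1 ∧ rho p.1 p.2.2 ≠ p.2.1}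

abbrev T2 : Type := {p : (Fin n → Fin n) × Fin n //
  (EvFix p.1 ∧ (Fx p.1).card = k) ∧ p.2 ∉ Fx p.1}

noncomputable def theEquiv : T1 n k ≃ T2 n k where
  toFun p := ⟨(Function.update p.1.1 p.1.2.1 p.1.2.2, p.1.2.1), by
    obtain ⟨⟨f, r, u⟩, ⟨hf, hcard⟩, hr, hu⟩ := p
    simp only at *
    have hrfix : f r = r := by simpa using hr
    have hune : u ≠ r := by
      intro h; subst h; exact hu (rho_of_fixed hrfix)
    refine ⟨⟨update_evfix hf hrfix hu, ?_⟩, ?_⟩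
    · rw [update_Fx hrfix hune, Finset.card_erase_of_mem hr, hcard]
      omega
    · rw [update_Fx hrfix hune]
      simp⟩
  invFun p := ⟨(Function.update p.1.1 p.1.2 p.1.2, p.1.2, p.1.1 p.1.2), by
    obtain ⟨⟨g, c⟩, ⟨hg, hcard⟩, hc⟩ := p
    simp only at *
    have hgc : g c ≠ c := by simpa using hc
    refine ⟨⟨update_evfix' hg c, ?_⟩, ?_, ?_⟩
    · rw [update_Fx', Finset.card_insert_of_notMem hc, hcard]
    · rw [update_Fx']; simp
    · exact update_rho_ne hg hgc⟩
  left_inv p := by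
    obtain ⟨⟨f, r, u⟩, ⟨hf, hcard⟩, hr, hu⟩ := p
    have hrfix : f r = r := by simpa using hr
    apply Subtype.ext
    simp only [Function.update_self, Function.update_idem]
    have h5 : Function.update f r r = f := by
      rw [Function.update_eq_self_iff]
      exact hrfix.symm
    rw [h5]
  right_inv p := by
    obtain ⟨⟨g, c⟩, ⟨hg, hcard⟩, hc⟩ := p
    apply Subtype.ext
    simp only [Function.update_self, Function.update_idem]
    have h5 : Function.update g c (g c) = g := Function.update_eq_self c g
    rw [h5]

def e1 : T1 n k ≃ Σ f : SkT n (k+1), {ru : Fin n × Fin n // ru.1 ∈ Fx f.1 ∧ rho f.1 ru.2 ≠ ru.1} where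
  toFun p := ⟨⟨p.1.1, p.2.1⟩, ⟨p.1.2, p.2.2⟩⟩
  invFun q := ⟨(q.1.1, q.2.1.1, q.2.1.2), q.1.2, q.2.2⟩
  left_inv p := rfl
  right_inv q := rfl

def e2 : T2 n k ≃ Σ f : SkT n k, {c : Fin n // c ∉ Fx f.1} where
  toFun p := ⟨⟨p.1.1, p.2.1⟩, ⟨p.1.2, p.2.2⟩⟩
  invFun q := ⟨(q.1.1, q.2.1), q.1.2, q.2.2⟩
  left_inv p := rfl
  right_inv q := rfl

lemma sum_fibers {f : Fin n → Fin n} (hf : EvFix f) :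
    ∑ r ∈ Fx f, (Finset.univ.filter fun u => rho f u = r).card = n := by
  classical
  have h := Finset.card_eq_sum_card_fiberwise
    (f := rho f) (s := Finset.univ) (t := Fx f) (fun u _ => rho_mem_Fx hf u)
  simpa using h.symm

lemma inner1 {f : Fin n → Fin n} (hf : EvFix f) (hcard : (Fx f).card = k+1) :
    Nat.card {ru : Fin n × Fin n // ru.1 ∈ Fx f ∧ rho f ru.2 ≠ ru.1} = k * n := by
  classical
  have e : {ru : Fin n × Fin n // ru.1 ∈ Fx f ∧ rho f ru.2 ≠ ru.1} ≃
      Σ r : {r : Fin n // r ∈ Fx f}, {u : Fin n // rho f u ≠ r.1} :=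
    { toFun := fun p => ⟨⟨p.1.1, p.2.1⟩, ⟨p.1.2, p.2.2⟩⟩
      invFun := fun q => ⟨(q.1.1, q.2.1), q.1.2, q.2.2⟩
      left_inv := fun p => rfl
      right_inv := fun q => rfl }
  rw [Nat.card_congr e, Nat.card_eq_fintype_card, Fintype.card_sigma]
  have hterm : ∀ r : {r : Fin n // r ∈ Fx f},
      Fintype.card {u : Fin n // rho f u ≠ r.1} =
        n - (Finset.univ.filter fun u => rho f u = r.1).card := by
    intro r
    rw [Fintype.card_subtype_compl, Fintype.card_fin]
    congr 1
    rw [Fintype.card_subtype]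
  calc ∑ r : {r : Fin n // r ∈ Fx f}, Fintype.card {u : Fin n // rho f u ≠ r.1}
      = ∑ r ∈ (Fx f).attach, (n - (Finset.univ.filter fun u => rho f u = r.1).card) := by
        rw [← Finset.univ_eq_attach]
        exact Finset.sum_congr rfl (fun r _ => hterm r)
    _ = ∑ r ∈ Fx f, (n - (Finset.univ.filter fun u => rho f u = r).card) :=
        Finset.sum_attach (Fx f) (fun r => n - (Finset.univ.filter fun u => rho f u = r).card)
    _ = k * n := by
        have hle : ∀ r ∈ Fx f, (Finset.univ.filter fun u => rho f u = r).card ≤ n := by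
          intro r _
          exact (Finset.card_filter_le _ _).trans (by simp)
        have hsplit : ∑ r ∈ Fx f, (n - (Finset.univ.filter fun u => rho f u = r).card)
            + ∑ r ∈ Fx f, (Finset.univ.filter fun u => rho f u = r).card
            = ∑ _r ∈ Fx f, n := by
          rw [← Finset.sum_add_distrib]
          exact Finset.sum_congr rfl (fun r hr => by have := hle r hr; omega)
        rw [sum_fibers n hf, Finset.sum_const, hcard, smul_eq_mul] at hsplit
        have hkn : (k+1) * n = k * n + n := by ring
        omega

lemma card_T1 : Nat.card (T1 n k) = Nat.card (SkT n (k+1)) * (k * n) := by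
  classical
  rw [Nat.card_congr (e1 n k), Nat.card_eq_fintype_card, Fintype.card_sigma]
  have hterm : ∀ f : SkT n (k+1),
      Fintype.card {ru : Fin n × Fin n // ru.1 ∈ Fx f.1 ∧ rho f.1 ru.2 ≠ ru.1} = k * n := by
    intro f
    rw [← Nat.card_eq_fintype_card]
    exact inner1 n k f.2.1 f.2.2
  rw [Finset.sum_congr rfl (fun f _ => hterm f), Finset.sum_const, Finset.card_univ,
    Nat.card_eq_fintype_card]
  simp [mul_comm]

lemma card_T2 : Nat.card (T2 n k) = Nat.card (SkT n k) * (n - k) := by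
  classical
  rw [Nat.card_congr (e2 n k), Nat.card_eq_fintype_card, Fintype.card_sigma]
  have hterm : ∀ f : SkT n k, Fintype.card {c : Fin n // c ∉ Fx f.1} = n - k := by
    intro f
    rw [Fintype.card_subtype_compl, Fintype.card_fin]
    congr 1
    rw [Fintype.card_coe]
    exact f.2.2
  rw [Finset.sum_congr rfl (fun f _ => hterm f), Finset.sum_const, Finset.card_univ,
    Nat.card_eq_fintype_card]
  simp [mul_comm]

lemma skt_recurrence : Nat.card (SkT n (k+1)) * (k * n) = Nat.card (SkT n k) * (n - k) := by
  rw [← card_T1, ← card_T2]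
  exact Nat.card_congr (theEquiv n k)

lemma skt_base : Nat.card (SkT n n) = 1 := by
  rw [Nat.card_eq_one_iff_unique]
  refine ⟨⟨fun f g => ?_⟩, ⟨⟨id, fun i => ⟨0, rfl⟩, by simp [Fx]⟩⟩⟩
  have key : ∀ h : SkT n n, h.1 = id := by
    intro h
    have huniv : Fx h.1 = Finset.univ := by
      apply Finset.eq_univ_of_card
      rw [h.2.2, Fintype.card_fin]
    funext i
    have : i ∈ Fx h.1 := huniv ▸ Finset.mem_univ i
    simpa using this
  exact Subtype.ext ((key f).trans (key g).symm)

lemma card_skt_aux (n : ℕ) : ∀ d k, 1 ≤ k → k ≤ n → n - k = d →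
    Nat.card (SkT n k) = Nat.choose (n-1) (k-1) * n^(n-k) := by
  intro d
  induction d with
  | zero =>
    intro k hk1 hkn hd
    have hk : k = n := by omega
    subst hk
    rw [skt_base, Nat.sub_self, pow_zero, Nat.choose_self]
    rfl
  | succ d ih =>
    intro k hk1 hkn hd
    have ihv := ih (k+1) (by omega) (by omega) (by omega)
    have hrec := skt_recurrence n k
    rw [ihv] at hrec
    have hid : (n-1).choose k * k = (n-1).choose (k-1) * (n - k) := by
      have h := Nat.choose_succ_right_eq (n-1) (k-1)
      rw [show k - 1 + 1 = k by omega] at h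
      rw [h]
      congr 1
      omega
    set a := (n-1).choose k with ha
    set b := (n-1).choose (k-1) with hb
    set C := Nat.card (SkT n k) with hC
    have hpow : n^(n-k) = n^(n-(k+1)) * n := by
      rw [← pow_succ]
      congr 1
      omega
    set P := n^(n-(k+1)) with hP
    have key : C * (n-k) = (b * (P * n)) * (n-k) := by
      rw [← hrec]
      calc a * P * (k * n) = (a * k) * (P * n) := by ring
        _ = (b * (n-k)) * (P * n) := by rw [hid]
        _ = (b * (P * n)) * (n-k) := by ring
    have hnk : 0 < n - k := by omega
    have := Nat.eq_of_mul_eq_mul_right hnk key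
    rw [this, hpow]

theorem card_skt (n k : ℕ) (h1 : 1 ≤ k) (h2 : k ≤ n) :
    Nat.card (SkT n k) = Nat.choose (n-1) (k-1) * n^(n-k) :=
  card_skt_aux n (n-k) k h1 h2 rfl

end count


section levels
variable {m : ℕ}

def lev (a : Fin m → ℕ) : ℕ := ∑ i, a i

lemma lev_eq_zero_iff {a : Fin m → ℕ} : lev a = 0 ↔ a = 0 := by
  unfold lev
  rw [Finset.sum_eq_zero_iff]
  constructor
  · intro h; funext i; exact h i (Finset.mem_univ i)
  · intro h i _; rw [h]; rfl

lemma le_lev {a : Fin m → ℕ} (i : Fin m) : a i ≤ lev a :=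
  Finset.single_le_sum (fun j _ => Nat.zero_le (a j)) (Finset.mem_univ i)

lemma pair_le_lev {a : Fin m → ℕ} {i j : Fin m} (hij : i ≠ j) : a i + a j ≤ lev a := by
  have h : ∑ x ∈ ({i, j} : Finset (Fin m)), a x ≤ lev a :=
    Finset.sum_le_sum_of_subset (Finset.subset_univ _)
  rwa [Finset.sum_pair hij] at h

lemma triple_le_lev {a : Fin m → ℕ} {i j k : Fin m} (hij : i ≠ j) (hik : i ≠ k)
    (hjk : j ≠ k) : a i + a j + a k ≤ lev a := by
  have h : ∑ x ∈ ({i, j, k} : Finset (Fin m)), a x ≤ lev a :=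
    Finset.sum_le_sum_of_subset (Finset.subset_univ _)
  rw [Finset.sum_insert (by simp [hij, hik]), Finset.sum_pair hjk] at h
  omega

@[simp] lemma lev_single {i : Fin m} (c : ℕ) : lev (Pi.single i c) = c := by
  unfold lev
  simp

lemma lev_add {a b : Fin m → ℕ} : lev (a + b) = lev a + lev b := by
  unfold lev
  simp [Finset.sum_add_distrib]

lemma lev_type1 {a : Fin m → ℕ} (h : IsType1 a) : lev a = 2 := by
  obtain ⟨i, j, hij, rfl⟩ := h
  rw [lev_add]
  simp

lemma lev_type2 {a : Fin m → ℕ} (h : IsType2 a) : lev a = 2 := by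
  obtain ⟨i, rfl⟩ := h
  simp

lemma eq_single_of_only {a : Fin m → ℕ} {i : Fin m} (h : ∀ j, j ≠ i → a j = 0) :
    a = Pi.single i (a i) := by
  funext j
  by_cases hj : j = i
  · subst hj; simp
  · rw [h j hj, Pi.single_apply, if_neg hj]

lemma lev_one_eq {a : Fin m → ℕ} (h : lev a = 1) : ∃ i, a = Pi.single i 1 := by
  have hne : a ≠ 0 := by
    intro h0
    rw [← lev_eq_zero_iff] at h0
    omega
  have hex : ∃ i, a i ≠ 0 := by
    by_contra hc
    push_neg at hc
    exact hne (funext fun i => hc i)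
  obtain ⟨i, hi⟩ := hex
  have hzero : ∀ j, j ≠ i → a j = 0 := by
    intro j hj
    have := pair_le_lev (a := a) (Ne.symm hj)
    have hi1 := le_lev (a := a) i
    omega
  have hai : a i = 1 := by
    have := le_lev (a := a) i
    omega
  refine ⟨i, ?_⟩
  rw [eq_single_of_only hzero, hai]

lemma mem_mu_iff {a : Fin m → ℕ} : a ∈ mu m ↔ lev a ≤ 1 := by
  unfold mu
  simp only [Finset.mem_insert, Finset.mem_image, Finset.mem_univ, true_and]
  constructor
  · rintro (rfl | ⟨i, rfl⟩)
    · simp [lev_eq_zero_iff.mpr rfl]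
    · simp
  · intro h
    interval_cases hl : lev a
    · left; exact lev_eq_zero_iff.mp hl
    · right
      obtain ⟨i, hi⟩ := lev_one_eq hl
      exact ⟨i, hi.symm⟩

lemma lev_two_cases {a : Fin m → ℕ} (h : lev a = 2) : IsType2 a ∨ IsType1 a := by
  have hex : ∃ i, a i ≠ 0 := by
    by_contra hc
    push_neg at hc
    have : a = 0 := funext fun i => hc i
    rw [← lev_eq_zero_iff] at this
    omega
  obtain ⟨i, hi⟩ := hex
  have hle := le_lev (a := a) i
  by_cases h2 : a i = 2
  · left
    have hzero : ∀ j, j ≠ i → a j = 0 := by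
      intro j hj
      have := pair_le_lev (a := a) (Ne.symm hj)
      omega
    exact ⟨i, by rw [eq_single_of_only hzero, h2]⟩
  · right
    have h1 : a i = 1 := by omega
    have hex2 : ∃ j, j ≠ i ∧ a j ≠ 0 := by
      by_contra hc
      push_neg at hc
      have := eq_single_of_only (a := a) (i := i) (fun j hj => hc j hj)
      rw [this, h1] at h
      simp at h
    obtain ⟨j, hji, hj⟩ := hex2
    have hj1 : a j = 1 := by
      have := pair_le_lev (a := a) (Ne.symm hji)
      omega
    have hzero : ∀ l, l ≠ i → l ≠ j → a l = 0 := by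
      intro l hli hlj
      have := triple_le_lev (a := a) (Ne.symm hji) (Ne.symm hli) (Ne.symm hlj)
      omega
    refine ⟨i, j, Ne.symm hji, ?_⟩
    funext l
    by_cases hli : l = i
    · subst hli
      simp [Pi.single_apply, hji, h1, Ne.symm hji]
    · by_cases hlj : l = j
      · subst hlj
        simp [Pi.single_apply, hji, hj1, hli]
      · rw [hzero l hli hlj]
        simp [Pi.single_apply, hli, hlj]

lemma card_mu : (mu m).card = m + 1 := by
  unfold mu
  rw [Finset.card_insert_of_notMem, Finset.card_image_of_injective _ ?inj]
  · simp
  case inj =>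
    intro i j hij
    by_contra hne
    have := congrFun hij i
    simp [Pi.single_apply, hne] at this
  · simp only [Finset.mem_image, Finset.mem_univ, true_and, not_exists]
    intro i h
    have := congrFun h i
    simp at this

end levels


section classcount
variable {V : Type*} [Fintype V] [DecidableEq V]

noncomputable def Qcard (r : V → V → Prop) : ℕ :=
  Nat.card (Quotient (Relation.EqvGen.setoid r))

lemma eqvgen_of_none {r : V → V → Prop} (hr : ∀ x y, ¬ r x y) {x y : V}
    (h : Relation.EqvGen r x y) : x = y := by
  induction h with
  | rel u v h => exact absurd h (hr u v)
  | refl => rfl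
  | symm u v _ ih => exact ih.symm
  | trans u v w _ _ ih1 ih2 => exact ih1.trans ih2

lemma eqvgen_insert {r : V → V → Prop} {a b : V} {x y : V}
    (h : Relation.EqvGen (fun u v => r u v ∨ (u = a ∧ v = b)) x y) :
    Relation.EqvGen r x y ∨
      (Relation.EqvGen r x a ∧ Relation.EqvGen r b y) ∨
      (Relation.EqvGen r x b ∧ Relation.EqvGen r a y) := by
  induction h with
  | rel u v h =>
    rcases h with h | ⟨rfl, rfl⟩
    · exact Or.inl (Relation.EqvGen.rel _ _ h)
    · exact Or.inr (Or.inl ⟨Relation.EqvGen.refl _, Relation.EqvGen.refl _⟩)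
  | refl u => exact Or.inl (Relation.EqvGen.refl u)
  | symm u v _ ih =>
    rcases ih with h | ⟨h1, h2⟩ | ⟨h1, h2⟩
    · exact Or.inl (Relation.EqvGen.symm _ _ h)
    · exact Or.inr (Or.inr ⟨Relation.EqvGen.symm _ _ h2, Relation.EqvGen.symm _ _ h1⟩)
    · exact Or.inr (Or.inl ⟨Relation.EqvGen.symm _ _ h2, Relation.EqvGen.symm _ _ h1⟩)
  | trans u v w _ _ ih1 ih2 =>
    rcases ih1 with h | ⟨h1, h2⟩ | ⟨h1, h2⟩ <;>
      rcases ih2 with g | ⟨g1, g2⟩ | ⟨g1, g2⟩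
    · exact Or.inl (Relation.EqvGen.trans _ _ _ h g)
    · exact Or.inr (Or.inl ⟨Relation.EqvGen.trans _ _ _ h g1, g2⟩)
    · exact Or.inr (Or.inr ⟨Relation.EqvGen.trans _ _ _ h g1, g2⟩)
    · exact Or.inr (Or.inl ⟨h1, Relation.EqvGen.trans _ _ _ h2 g⟩)
    · exact Or.inr (Or.inl ⟨h1, g2⟩)
    · exact Or.inl (Relation.EqvGen.trans _ _ _ h1 g2)
    · exact Or.inr (Or.inr ⟨h1, Relation.EqvGen.trans _ _ _ h2 g⟩)
    · exact Or.inl (Relation.EqvGen.trans _ _ _ h1 g2)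
    · exact Or.inr (Or.inr ⟨h1, g2⟩)

lemma qcard_insert_ge (r : V → V → Prop) (a b : V) :
    Qcard r ≤ Qcard (fun u v => r u v ∨ (u = a ∧ v = b)) + 1 := by
  classical
  set s := Relation.EqvGen.setoid r with hs
  set s' := Relation.EqvGen.setoid (fun u v => r u v ∨ (u = a ∧ v = b)) with hs'
  have hmono : ∀ x y : V, s.r x y → s'.r x y := by
    intro x y h
    exact Relation.EqvGen.mono (fun u v h => Or.inl h) _ _ h
  let ψ : Quotient s → Quotient s' := Quotient.map' id hmono
  let Φ : Quotient s → Quotient s' ⊕ Unit :=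
    fun q => if q = Quotient.mk s b then Sum.inr () else Sum.inl (ψ q)
  have hinj : Function.Injective Φ := by
    intro q1 q2 h
    by_cases h1 : q1 = Quotient.mk s b <;> by_cases h2 : q2 = Quotient.mk s b
    · rw [h1, h2]
    · simp [Φ, h1, h2] at h
    · simp [Φ, h1, h2] at h
    · simp only [Φ, if_neg h1, if_neg h2, Sum.inl.injEq] at h
      induction q1 using Quotient.inductionOn with | _ x =>
      induction q2 using Quotient.inductionOn with | _ y =>
      have hxy : s'.r x y := Quotient.exact' h
      rcases eqvgen_insert hxy with hh | ⟨hh1, hh2⟩ | ⟨hh1, hh2⟩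
      · exact Quotient.sound hh
      · exact absurd (Quotient.sound (Relation.EqvGen.symm _ _ hh2) : _ = _) h2
      · exact absurd (Quotient.sound hh1 : _ = _) h1
  have hcard := Nat.card_le_card_of_injective Φ hinj
  rw [Nat.card_sum] at hcard
  simpa [Qcard] using hcard

lemma qcard_congr {r r' : V → V → Prop} (h : ∀ x y, r x y ↔ r' x y) :
    Qcard r = Qcard r' := by
  have : r = r' := funext fun x => funext fun y => propext (h x y)
  rw [this]

lemma qcard_congr_eqvgen {r r' : V → V → Prop}
    (h : ∀ x y, Relation.EqvGen r x y ↔ Relation.EqvGen r' x y) :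
    Qcard r = Qcard r' := by
  have : Relation.EqvGen.setoid r = Relation.EqvGen.setoid r' := by
    apply Setoid.ext
    exact h
  unfold Qcard
  rw [this]

lemma class_bound (P : Finset (V × V)) :
    Fintype.card V ≤ Qcard (fun x y => (x, y) ∈ P) + P.card := by
  classical
  induction P using Finset.induction_on with
  | empty =>
    have hbij : Function.Bijective
        (fun v : V => Quotient.mk (Relation.EqvGen.setoid
          (fun x y : V => (x, y) ∈ (∅ : Finset (V × V)))) v) := by
      constructor
      · intro x y h
        exact eqvgen_of_none (fun x y hxy => by simp at hxy) (Quotient.exact h)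
      · intro q
        exact Quotient.inductionOn q (fun v => ⟨v, rfl⟩)
    have hcardeq : Qcard (fun x y : V => (x, y) ∈ (∅ : Finset (V × V))) = Fintype.card V := by
      unfold Qcard
      rw [← Nat.card_eq_of_bijective _ hbij, Nat.card_eq_fintype_card]
    rw [Finset.card_empty, Nat.add_zero, hcardeq]
  | @insert p P hnotmem ih =>
    have hcong : Qcard (fun x y : V => (x, y) ∈ insert p P) =
        Qcard (fun u v : V => ((u, v) ∈ P) ∨ (u = p.1 ∧ v = p.2)) := by
      apply qcard_congr
      intro x y
      rw [Finset.mem_insert]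
      constructor
      · rintro (h | h)
        · exact Or.inr ⟨congrArg Prod.fst h, congrArg Prod.snd h⟩
        · exact Or.inl h
      · rintro (h | ⟨h1, h2⟩)
        · exact Or.inr h
        · left
          rw [Prod.ext_iff]
          exact ⟨h1, h2⟩
    calc Fintype.card V ≤ Qcard (fun x y : V => (x, y) ∈ P) + P.card := ih
      _ ≤ (Qcard (fun u v : V => ((u, v) ∈ P) ∨ (u = p.1 ∧ v = p.2)) + 1) + P.card :=
          Nat.add_le_add_right (qcard_insert_ge _ p.1 p.2) _
      _ = Qcard (fun x y : V => (x, y) ∈ insert p P) + (insert p P).card := by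
          rw [Finset.card_insert_of_notMem hnotmem, hcong]
          ring

end classcount


section decode
variable {m : ℕ}

lemma pair_apply {i j x : Fin m} (hij : i ≠ j) :
    (Pi.single i 1 + Pi.single j 1 : Fin m → ℕ) x = if x = i ∨ x = j then 1 else 0 := by
  simp only [Pi.add_apply, Pi.single_apply]
  by_cases hxi : x = i <;> by_cases hxj : x = j
  · exact absurd (hxi.symm.trans hxj) hij
  all_goals simp [hxi, hxj, hij, Ne.symm hij]

lemma pair_eq_pair {i j i' j' : Fin m} (hij : i ≠ j) (hij' : i' ≠ j')
    (h : Pi.single i 1 + Pi.single j 1 = (Pi.single i' 1 + Pi.single j' 1 : Fin m → ℕ)) :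
    (i = i' ∧ j = j') ∨ (i = j' ∧ j = i') := by
  have hi := congrFun h i
  have hj := congrFun h j
  rw [pair_apply hij, pair_apply hij', if_pos (Or.inl rfl : i = i ∨ i = j)] at hi
  rw [pair_apply hij, pair_apply hij', if_pos (Or.inr rfl : j = i ∨ j = j)] at hj
  have hi' : i = i' ∨ i = j' := by
    by_contra hc
    rw [if_neg hc] at hi
    omega
  have hj' : j = i' ∨ j = j' := by
    by_contra hc
    rw [if_neg hc] at hj
    omega
  rcases hi' with rfl | rfl
  · rcases hj' with rfl | rfl
    · exact absurd rfl hij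
    · exact Or.inl ⟨rfl, rfl⟩
  · rcases hj' with rfl | rfl
    · exact Or.inr ⟨rfl, rfl⟩
    · exact absurd rfl hij

lemma type2_not_type1 {i : Fin m} : ¬ IsType1 (Pi.single i 2 : Fin m → ℕ) := by
  rintro ⟨u, v, huv, h⟩
  have hu := congrFun h u
  rw [pair_apply huv] at hu
  simp only [if_pos (Or.inl rfl)] at hu
  rw [Pi.single_apply] at hu
  by_cases h2 : u = i <;> simp [h2] at hu

lemma pair_ne_single2 {i j r : Fin m} (hij : i ≠ j) :
    Pi.single i 1 + Pi.single j 1 ≠ (Pi.single r 2 : Fin m → ℕ) := by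
  intro h
  exact type2_not_type1 ⟨i, j, hij, h.symm⟩

lemma single2_inj {i j : Fin m} (h : (Pi.single i 2 : Fin m → ℕ) = Pi.single j 2) : i = j := by
  have := congrFun h i
  rw [Pi.single_apply, Pi.single_apply, if_pos rfl] at this
  by_cases hij : i = j
  · exact hij
  · simp [hij] at this

lemma le_single2_cases {x : Fin m → ℕ} {i : Fin m} (h : ∀ l, x l ≤ (Pi.single i 2 : Fin m → ℕ) l) :
    x = 0 ∨ x = Pi.single i 1 ∨ x = Pi.single i 2 := by
  have hz : ∀ l, l ≠ i → x l = 0 := by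
    intro l hl
    have := h l
    rw [Pi.single_apply, if_neg hl] at this
    omega
  have hx : x = Pi.single i (x i) := eq_single_of_only hz
  have hxi : x i ≤ 2 := by
    have := h i
    rwa [Pi.single_apply, if_pos rfl] at this
  interval_cases hv : x i
  · left; rw [hx]; simp
  · right; left; exact hx
  · right; right; exact hx

lemma le_pair_cases {x : Fin m → ℕ} {i j : Fin m} (hij : i ≠ j)
    (h : ∀ l, x l ≤ (Pi.single i 1 + Pi.single j 1 : Fin m → ℕ) l) :
    x = 0 ∨ x = Pi.single i 1 ∨ x = Pi.single j 1 ∨ x = Pi.single i 1 + Pi.single j 1 := by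
  have hz : ∀ l, l ≠ i → l ≠ j → x l = 0 := by
    intro l hli hlj
    have := h l
    rw [pair_apply hij, if_neg (by tauto)] at this
    omega
  have hxi : x i ≤ 1 := by
    have := h i
    rwa [pair_apply hij, if_pos (Or.inl rfl)] at this
  have hxj : x j ≤ 1 := by
    have := h j
    rwa [pair_apply hij, if_pos (Or.inr rfl)] at this
  have hfun : x = Pi.single i (x i) + Pi.single j (x j) := by
    funext l
    by_cases hli : l = i
    · subst hli
      simp [Pi.single_apply, hij, Ne.symm hij]
    · by_cases hlj : l = j
      · subst hlj
        simp [Pi.single_apply, hli]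
      · rw [hz l hli hlj]
        simp [Pi.single_apply, hli, hlj]
  interval_cases hvi : x i
  · interval_cases hvj : x j
    · left; rw [hfun]; simp
    · right; right; left; rw [hfun]; simp
  · interval_cases hvj : x j
    · right; left; rw [hfun]; simp
    · right; right; right; exact hfun

lemma pair_le_of_nonzero {a : Fin m → ℕ} {i j : Fin m} (hij : i ≠ j)
    (hi : a i ≠ 0) (hj : a j ≠ 0) :
    ∀ l, (Pi.single i 1 + Pi.single j 1 : Fin m → ℕ) l ≤ a l := by
  intro l
  rw [pair_apply hij]
  by_cases hli : l = i
  · subst hli; simp; omega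
  · by_cases hlj : l = j
    · subst hlj; simp [hli]; omega
    · simp [hli, hlj]

lemma single2_le_of_two {a : Fin m → ℕ} {i : Fin m} (hi : 2 ≤ a i) :
    ∀ l, (Pi.single i 2 : Fin m → ℕ) l ≤ a l := by
  intro l
  rw [Pi.single_apply]
  by_cases hli : l = i
  · subst hli; simp [hi]
  · simp [hli]

end decode


section structure1
variable {m : ℕ} {F : Finset (Fin m → ℕ)}

lemma sk_card (hmu : mu m ⊆ F) (hcard : F.card = 2*m+1) : (F \ mu m).card = m := by
  rw [Finset.card_sdiff_of_subset hmu, hcard, card_mu]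
  omega

lemma mem_sk_lev {a : Fin m → ℕ} (ha : a ∈ F \ mu m) : 2 ≤ lev a := by
  rw [Finset.mem_sdiff] at ha
  have := ha.2
  rw [mem_mu_iff] at this
  omega

lemma lev2_mem_sk {a : Fin m → ℕ} (haF : a ∈ F) (hlev : lev a = 2) : a ∈ F \ mu m := by
  rw [Finset.mem_sdiff, mem_mu_iff]
  exact ⟨haF, by omega⟩

lemma pair_minor (hF : IsFerrers F) {a : Fin m → ℕ} {i j : Fin m} (ha : a ∈ F \ mu m)
    (hij : i ≠ j) (hi : a i ≠ 0) (hj : a j ≠ 0) :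
    Pi.single i 1 + Pi.single j 1 ∈ F \ mu m := by
  apply lev2_mem_sk
  · exact hF.2 a (Finset.mem_sdiff.mp ha).1 _ (pair_le_of_nonzero hij hi hj)
  · rw [lev_add]; simp

lemma loop_minor (hF : IsFerrers F) {a : Fin m → ℕ} {i : Fin m} (ha : a ∈ F \ mu m)
    (hi : 2 ≤ a i) : Pi.single i 2 ∈ F \ mu m := by
  apply lev2_mem_sk
  · exact hF.2 a (Finset.mem_sdiff.mp ha).1 _ (single2_le_of_two hi)
  · simp

def edges (F : Finset (Fin m → ℕ)) : Finset (Fin m × Fin m) :=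
  Finset.univ.filter fun p => p.1 < p.2 ∧ Pi.single p.1 1 + Pi.single p.2 1 ∈ F \ mu m

lemma mem_edges_iff {p : Fin m × Fin m} :
    p ∈ edges F ↔ p.1 < p.2 ∧ Pi.single p.1 1 + Pi.single p.2 1 ∈ F \ mu m := by
  simp [edges]

lemma op_mem_edges {u v : Fin m} (huv : u ≠ v)
    (h : Pi.single u 1 + Pi.single v 1 ∈ F \ mu m) :
    (if u < v then ((u,v) : Fin m × Fin m) else (v,u)) ∈ edges F := by
  rcases lt_or_gt_of_ne huv with hlt | hgt
  · rw [if_pos hlt, mem_edges_iff]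
    exact ⟨hlt, h⟩
  · rw [if_neg (by omega), mem_edges_iff]
    refine ⟨hgt, ?_⟩
    rwa [add_comm]

lemma card_edges_eq : (edges F).card = ((F \ mu m).filter IsType1).card := by
  classical
  apply Finset.card_bij (fun p _ => Pi.single p.1 1 + Pi.single p.2 1)
  · intro p hp
    rw [mem_edges_iff] at hp
    rw [Finset.mem_filter]
    exact ⟨hp.2, ⟨p.1, p.2, Fin.ne_of_lt hp.1, rfl⟩⟩
  · intro p hp q hq h
    rw [mem_edges_iff] at hp hq
    rcases pair_eq_pair (Fin.ne_of_lt hp.1) (Fin.ne_of_lt hq.1) h with ⟨h1, h2⟩ | ⟨h1, h2⟩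
    · exact Prod.ext h1 h2
    · exfalso
      have hp1 := hp.1
      have hq1 := hq.1
      rw [h1, h2] at hp1
      exact absurd (hp1.trans hq1) (lt_irrefl _)
  · intro a ha
    rw [Finset.mem_filter] at ha
    obtain ⟨haσ, i, j, hij, rfl⟩ := ha
    rcases lt_or_gt_of_ne hij with hlt | hgt
    · exact ⟨(i, j), mem_edges_iff.mpr ⟨hlt, haσ⟩, rfl⟩
    · refine ⟨(j, i), mem_edges_iff.mpr ⟨hgt, ?_⟩, ?_⟩
      · rwa [add_comm]
      · rw [add_comm]

lemma touches_of_pair {u v : Fin m} (huv : u ≠ v)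
    (h : Pi.single u 1 + Pi.single v 1 ∈ F \ mu m) : Touches (F \ mu m) u v := by
  refine ⟨_, h, ?_, ?_⟩
  · rw [pair_apply huv, if_pos (Or.inl rfl)]; omega
  · rw [pair_apply huv, if_pos (Or.inr rfl)]; omega

lemma eqvgen_touch_iff_relP (hF : IsFerrers F) (x y : Fin m) :
    Relation.EqvGen (Touches (F \ mu m)) x y ↔
      Relation.EqvGen (fun u v => (u,v) ∈ edges F) x y := by
  constructor
  · intro h
    induction h with
    | rel u v h =>
      obtain ⟨a, ha, hu, hv⟩ := h
      by_cases huv : u = v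
      · subst huv; exact Relation.EqvGen.refl u
      · have hpair := pair_minor hF ha huv hu hv
        rcases lt_or_gt_of_ne huv with hlt | hgt
        · exact Relation.EqvGen.rel _ _ (mem_edges_iff.mpr ⟨hlt, hpair⟩)
        · apply Relation.EqvGen.symm
          apply Relation.EqvGen.rel
          rw [mem_edges_iff]
          exact ⟨hgt, by rwa [add_comm]⟩
    | refl u => exact Relation.EqvGen.refl u
    | symm u v _ ih => exact Relation.EqvGen.symm _ _ ih
    | trans u v w _ _ ih1 ih2 => exact Relation.EqvGen.trans _ _ _ ih1 ih2
  · intro h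
    induction h with
    | rel u v h =>
      rw [mem_edges_iff] at h
      exact Relation.EqvGen.rel _ _ (touches_of_pair (Fin.ne_of_lt h.1) h.2)
    | refl u => exact Relation.EqvGen.refl u
    | symm u v _ ih => exact Relation.EqvGen.symm _ _ ih
    | trans u v w _ _ ih1 ih2 => exact Relation.EqvGen.trans _ _ _ ih1 ih2

theorem structure_main (hF : IsFerrers F) (hmu : mu m ⊆ F) (hcard : F.card = 2*m+1)
    (hblk : ∀ B : Set (Fin m), IsBlock (F \ mu m) B →
      ∃ a ∈ F \ mu m, SuppIn a B ∧ ¬ IsType1 a) :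
    (∀ a ∈ F \ mu m, IsType1 a ∨ IsType2 a) ∧
    (∀ i : Fin m, ∃ r, Relation.EqvGen (Touches (F \ mu m)) i r ∧
      Pi.single r 2 ∈ F \ mu m) := by
  classical
  set σ := F \ mu m with hσ
  set S := Relation.EqvGen.setoid (Touches σ) with hS
  -- the choice function θ
  have θex : ∀ q : Quotient S, ∃ a, a ∈ σ ∧
      SuppIn a {j | Relation.EqvGen (Touches σ) q.out j} ∧ ¬ IsType1 a := by
    intro q
    obtain ⟨a, ha, h1, h2⟩ := hblk _ ⟨q.out, rfl⟩
    exact ⟨a, ha, h1, h2⟩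
  set θ : Quotient S → (Fin m → ℕ) := fun q => Classical.choose (θex q) with hθ
  have θspec : ∀ q, θ q ∈ σ ∧
      SuppIn (θ q) {j | Relation.EqvGen (Touches σ) q.out j} ∧ ¬ IsType1 (θ q) :=
    fun q => Classical.choose_spec (θex q)
  have θsupp : ∀ q : Quotient S, ∀ i : Fin m, θ q i ≠ 0 → Quotient.mk S i = q := by
    intro q i hi
    have h1 : Relation.EqvGen (Touches σ) q.out i := (θspec q).2.1 i hi
    calc Quotient.mk S i = Quotient.mk S q.out := (Quotient.sound h1).symm
      _ = q := Quotient.out_eq q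
  have θnonzero : ∀ q : Quotient S, ∃ i, θ q i ≠ 0 := by
    intro q
    by_contra hc
    push_neg at hc
    have h0 : θ q = 0 := funext fun i => hc i
    have hlz : lev (0 : Fin m → ℕ) = 0 := lev_eq_zero_iff.mpr rfl
    have := mem_sk_lev (θspec q).1
    rw [h0, hlz] at this
    omega
  have θinj : Function.Injective θ := by
    intro q q' h
    obtain ⟨i, hi⟩ := θnonzero q
    have hi' : θ q' i ≠ 0 := by rw [← h]; exact hi
    rw [← θsupp q i hi, ← θsupp q' i hi']
  -- uniqueness of non-type-1 element per class
  set nt1 : Finset (Fin m → ℕ) := σ.filter (fun a => ¬ IsType1 a) with hnt1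
  have θmem : ∀ q, θ q ∈ nt1 := by
    intro q
    rw [hnt1, Finset.mem_filter]
    exact ⟨(θspec q).1, (θspec q).2.2⟩
  set θ' : Quotient S → {a // a ∈ nt1} := fun q => ⟨θ q, θmem q⟩ with hθ'
  have θ'inj : Function.Injective θ' := by
    intro q q' h
    exact θinj (congrArg Subtype.val h)
  -- cardinality bound 1 : m ≤ c + t1
  have hQc : Nat.card (Quotient S) = Qcard (Touches σ) := rfl
  have hb1 : m ≤ Qcard (Touches σ) + ((σ.filter IsType1)).card := by
    have hcb := class_bound (edges F)
    rw [Fintype.card_fin] at hcb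
    have heq : Qcard (fun x y => (x,y) ∈ edges F) = Qcard (Touches σ) :=
      (qcard_congr_eqvgen (fun x y => (eqvgen_touch_iff_relP hF x y))).symm
    rw [heq, card_edges_eq] at hcb
    exact hcb
  -- cardinality bound 2 : c ≤ nt1
  have hb2 : Qcard (Touches σ) ≤ nt1.card := by
    have h := Nat.card_le_card_of_injective θ' θ'inj
    rw [hQc] at h
    rwa [Nat.card_eq_fintype_card, Fintype.card_coe] at h
  have hsplit : (σ.filter IsType1).card + nt1.card = m := by
    rw [hnt1]
    rw [Finset.card_filter_add_card_filter_not]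
    exact sk_card hmu hcard
  have hceq : Qcard (Touches σ) = nt1.card := by omega
  have ht1card : (σ.filter IsType1).card = m - Qcard (Touches σ) := by omega
  -- θ' is surjective
  have θ'surj : Function.Surjective θ' := by
    have hbij : Function.Bijective θ' := by
      letI : Fintype (Quotient S) := Fintype.ofFinite _
      rw [Fintype.bijective_iff_injective_and_card]
      refine ⟨θ'inj, ?_⟩
      rw [← Nat.card_eq_fintype_card, ← Nat.card_eq_fintype_card, hQc,
        Nat.card_eq_fintype_card (α := {a // a ∈ nt1}), Fintype.card_coe, hceq]
    exact hbij.2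
  -- uniqueness: two non-type1 elements with EqvGen-related support points are equal
  have huniq : ∀ a a' : Fin m → ℕ, a ∈ nt1 → a' ∈ nt1 →
      ∀ i i' : Fin m, a i ≠ 0 → a' i' ≠ 0 →
      Relation.EqvGen (Touches σ) i i' → a = a' := by
    intro a a' ha ha' i i' hi hi' hrel
    obtain ⟨q, hq⟩ := θ'surj ⟨a, ha⟩
    obtain ⟨q', hq'⟩ := θ'surj ⟨a', ha'⟩
    have hqa : θ q = a := congrArg Subtype.val hq
    have hqa' : θ q' = a' := congrArg Subtype.val hq'
    have h1 : Quotient.mk S i = q := θsupp q i (by rw [hqa]; exact hi)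
    have h2 : Quotient.mk S i' = q' := θsupp q' i' (by rw [hqa']; exact hi')
    have h3 : q = q' := by
      rw [← h1, ← h2]
      exact Quotient.sound hrel
    rw [← hqa, ← hqa', h3]
  -- main claim S1
  have hS1 : ∀ a ∈ σ, IsType1 a ∨ IsType2 a := by
    intro a ha
    by_contra hc
    push_neg at hc
    obtain ⟨hnot1, hnot2⟩ := hc
    have hlev := mem_sk_lev ha
    have hlev3 : 3 ≤ lev a := by
      rcases Nat.lt_or_ge (lev a) 3 with h | h
      · have : lev a = 2 := by omega
        rcases lev_two_cases this with h2 | h1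
        · exact absurd h2 hnot2
        · exact absurd h1 hnot1
      · exact h
    have hant1 : a ∈ nt1 := by
      rw [hnt1, Finset.mem_filter]
      exact ⟨ha, hnot1⟩
    by_cases hbig : ∃ i, 2 ≤ a i
    · -- loop minor case
      obtain ⟨i, hi⟩ := hbig
      have hla : Pi.single i 2 ∈ σ := loop_minor hF ha hi
      have hlant1 : Pi.single i 2 ∈ nt1 := by
        rw [hnt1, Finset.mem_filter]
        exact ⟨hla, type2_not_type1⟩
      have heq : a = Pi.single i 2 := by
        apply huniq a _ hant1 hlant1 i i (by omega) (by simp)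
        exact Relation.EqvGen.refl i
      rw [heq] at hlev3
      simp at hlev3
    · -- multiplicity free, support ≥ 3
      push_neg at hbig
      obtain ⟨i, hi⟩ : ∃ i, a i ≠ 0 := by
        by_contra hc2
        push_neg at hc2
        have h0 : a = 0 := funext fun i => hc2 i
        have hlz : lev (0 : Fin m → ℕ) = 0 := lev_eq_zero_iff.mpr rfl
        rw [h0, hlz] at hlev
        omega
      obtain ⟨j, hji, hj⟩ : ∃ j, j ≠ i ∧ a j ≠ 0 := by
        by_contra hc2
        push_neg at hc2
        have h4 := eq_single_of_only (a := a) (i := i) (fun l hl => hc2 l hl)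
        rw [h4, lev_single] at hlev3
        have := hbig i
        omega
      obtain ⟨k, hki, hkj, hk⟩ : ∃ k, k ≠ i ∧ k ≠ j ∧ a k ≠ 0 := by
        by_contra hc2
        push_neg at hc2
        have hsup : ∀ l, l ≠ i → l ≠ j → a l = 0 := fun l h1 h2 => hc2 l h1 h2
        have hsum : lev a = a i + a j := by
          unfold lev
          rw [← Finset.sum_pair (Ne.symm hji)]
          apply (Finset.sum_subset (Finset.subset_univ _) ?_).symm
          intro l _ hl
          simp only [Finset.mem_insert, Finset.mem_singleton] at hl
          push_neg at hl
          exact hsup l hl.1 hl.2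
        have h5 := hbig i
        have h6 := hbig j
        omega
      -- the triangle edges
      have he_ij : Pi.single i 1 + Pi.single j 1 ∈ σ := pair_minor hF ha (Ne.symm hji) hi hj
      have he_ik : Pi.single i 1 + Pi.single k 1 ∈ σ := pair_minor hF ha (Ne.symm hki) hi hk
      have he_jk : Pi.single j 1 + Pi.single k 1 ∈ σ := pair_minor hF ha (Ne.symm hkj) hj hk
      -- erase the (i,j) edge: classes don't change
      set pe : Fin m × Fin m := if i < j then (i,j) else (j,i) with hpe
      have hpemem : pe ∈ edges F := op_mem_edges (Ne.symm hji) he_ij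
      set P' : Finset (Fin m × Fin m) := (edges F).erase pe with hP'
      have hP'sub : ∀ p, p ∈ P' → p ∈ edges F := fun p hp => Finset.mem_of_mem_erase hp
      -- the two other triangle edges are in P'
      have hik_ne : (if i < k then ((i,k) : Fin m × Fin m) else (k,i)) ≠ pe := by
        rw [hpe]
        split <;> split <;>
          (intro h; rw [Prod.ext_iff] at h; simp at h; omega)
      have hjk_ne : (if j < k then ((j,k) : Fin m × Fin m) else (k,j)) ≠ pe := by
        rw [hpe]
        split <;> split <;>
          (intro h; rw [Prod.ext_iff] at h; simp at h; omega)
      have hikP' : (if i < k then ((i,k) : Fin m × Fin m) else (k,i)) ∈ P' :=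
        Finset.mem_erase.mpr ⟨hik_ne, op_mem_edges (Ne.symm hki) he_ik⟩
      have hjkP' : (if j < k then ((j,k) : Fin m × Fin m) else (k,j)) ∈ P' :=
        Finset.mem_erase.mpr ⟨hjk_ne, op_mem_edges (Ne.symm hkj) he_jk⟩
      have hop_rel : ∀ (u v : Fin m), (if u < v then ((u,v) : Fin m × Fin m) else (v,u)) ∈ P' →
          Relation.EqvGen (fun x y => (x,y) ∈ P') u v := by
        intro u v huv
        split at huv
        · exact Relation.EqvGen.rel _ _ huv
        · exact Relation.EqvGen.symm _ _ (Relation.EqvGen.rel _ _ huv)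
      -- EqvGen equality between P' and edges F
      have heqv : ∀ x y, Relation.EqvGen (fun u v => (u,v) ∈ edges F) x y ↔
          Relation.EqvGen (fun u v => (u,v) ∈ P') x y := by
        intro x y
        constructor
        · intro h
          induction h with
          | rel u v h =>
            by_cases huv : (u, v) = pe
            · -- go through k
              have hkij : Relation.EqvGen (fun x y => (x,y) ∈ P') i j :=
                Relation.EqvGen.trans _ _ _ (hop_rel i k hikP')
                  (Relation.EqvGen.symm _ _ (hop_rel j k hjkP'))
              rw [hpe] at huv
              split at huv <;> rw [Prod.ext_iff] at huv <;>
                obtain ⟨h1, h2⟩ := huv <;> simp only at h1 h2 <;> subst h1 <;> subst h2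
              · exact hkij
              · exact Relation.EqvGen.symm _ _ hkij
            · exact Relation.EqvGen.rel _ _ (Finset.mem_erase.mpr ⟨huv, h⟩)
          | refl u => exact Relation.EqvGen.refl u
          | symm u v _ ih => exact Relation.EqvGen.symm _ _ ih
          | trans u v w _ _ ih1 ih2 => exact Relation.EqvGen.trans _ _ _ ih1 ih2
        · intro h
          exact Relation.EqvGen.mono (fun u v huv => hP'sub (u,v) huv) _ _ h
      -- contradiction via class bound on P'
      have hcb' := class_bound P'
      rw [Fintype.card_fin] at hcb'
      have hcceq : Qcard (fun x y : Fin m => (x,y) ∈ P') = Qcard (Touches σ) := by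
        rw [← qcard_congr_eqvgen heqv]
        exact (qcard_congr_eqvgen (fun x y => (eqvgen_touch_iff_relP hF x y))).symm
      have hP'card : P'.card = (edges F).card - 1 := Finset.card_erase_of_mem hpemem
      rw [hcceq, hP'card, card_edges_eq] at hcb'
      rw [← hσ] at hcb'
      -- we have t1.card = m - Qcard and Qcard ≤ nt1.card etc.
      have hQle : Qcard (Touches σ) + 1 ≤ m := by
        have ht1pos : 1 ≤ (σ.filter IsType1).card := by
          have : Pi.single i 1 + Pi.single j 1 ∈ σ.filter IsType1 := by
            rw [Finset.mem_filter]
            exact ⟨he_ij, ⟨i, j, Ne.symm hji, rfl⟩⟩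
          exact Finset.card_pos.mpr ⟨_, this⟩
        omega
      omega
  refine ⟨hS1, ?_⟩
  -- S2 : every class contains a loop
  intro i
  set q : Quotient S := Quotient.mk S i with hq
  have hmem := θmem q
  have hspec := θspec q
  rcases hS1 (θ q) hspec.1 with h1 | h2
  · exact absurd h1 hspec.2.2
  · obtain ⟨r, hr⟩ := h2
    refine ⟨r, ?_, ?_⟩
    · have hrB : Relation.EqvGen (Touches σ) q.out r := by
        apply hspec.2.1
        rw [hr]
        simp
      have hiq : Relation.EqvGen (Touches σ) q.out i := by
        have := Quotient.mk_out (s := S) i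
        exact this
      exact Relation.EqvGen.trans _ _ _ (Relation.EqvGen.symm _ _ hiq) hrB
    · rw [← hr]
      exact hspec.1

end structure1


section graph
variable {m : ℕ}

def skGraph (σ : Finset (Fin m → ℕ)) : SimpleGraph (Fin m) where
  Adj i j := i ≠ j ∧ Pi.single i 1 + Pi.single j 1 ∈ σ
  symm := by
    constructor
    intro i j ⟨h1, h2⟩
    refine ⟨Ne.symm h1, ?_⟩
    rwa [add_comm]
  loopless := ⟨fun i h => h.1 rfl⟩

lemma skGraph_adj {σ : Finset (Fin m → ℕ)} {i j : Fin m} :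
    (skGraph σ).Adj i j ↔ i ≠ j ∧ Pi.single i 1 + Pi.single j 1 ∈ σ := Iff.rfl

lemma reach_of_eqvgen {F : Finset (Fin m → ℕ)} (hF : IsFerrers F) {x y : Fin m}
    (h : Relation.EqvGen (Touches (F \ mu m)) x y) : (skGraph (F \ mu m)).Reachable x y := by
  induction h with
  | rel u v h =>
    obtain ⟨a, ha, hu, hv⟩ := h
    by_cases huv : u = v
    · subst huv; rfl
    · exact (SimpleGraph.Adj.reachable ⟨huv, pair_minor hF ha huv hu hv⟩)
  | refl u => rfl
  | symm u v _ ih => exact ih.symm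
  | trans u v w _ _ ih1 ih2 => exact ih1.trans ih2

lemma eqvgen_of_reach {σ : Finset (Fin m → ℕ)} {x y : Fin m}
    (h : (skGraph σ).Reachable x y) : Relation.EqvGen (Touches σ) x y := by
  obtain ⟨w⟩ := h
  induction w with
  | nil => exact Relation.EqvGen.refl _
  | cons h p ih =>
    refine Relation.EqvGen.trans _ _ _ ?_ ih
    refine Relation.EqvGen.rel _ _ ⟨_, h.2, ?_, ?_⟩
    · rw [pair_apply h.1, if_pos (Or.inl rfl)]; omega
    · rw [pair_apply h.1, if_pos (Or.inr rfl)]; omega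

lemma exists_desc {V : Type*} (G : SimpleGraph V) {i r : V} (hne : i ≠ r)
    (hreach : G.Reachable i r) :
    ∃ j, G.Adj i j ∧ G.dist j r + 1 = G.dist i r := by
  have hpos : 0 < G.dist i r := hreach.pos_dist_of_ne hne
  obtain ⟨w, hw⟩ := hreach.exists_walk_length_eq_dist
  cases w with
  | nil => exact absurd rfl hne
  | @cons _ b _ h p =>
    refine ⟨b, h, ?_⟩
    have h1 : G.dist b r ≤ p.length := SimpleGraph.dist_le p
    have hreach_br : G.Reachable b r := ⟨p⟩
    obtain ⟨w2, hw2⟩ := hreach_br.exists_walk_length_eq_dist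
    have h3 : G.dist i r ≤ w2.length + 1 := by
      have := SimpleGraph.dist_le (SimpleGraph.Walk.cons h w2)
      simpa using this
    have h4 : (SimpleGraph.Walk.cons h p).length = p.length + 1 := by
      simp
    rw [h4] at hw
    omega

open Classical in
noncomputable def Rts (F : Finset (Fin m → ℕ)) (i : Fin m) : Finset (Fin m) :=
  Finset.univ.filter fun r => Pi.single r 2 ∈ F \ mu m ∧
    (skGraph (F \ mu m)).Reachable i r

lemma mem_Rts {F : Finset (Fin m → ℕ)} {i r : Fin m} :
    r ∈ Rts F i ↔ Pi.single r 2 ∈ F \ mu m ∧ (skGraph (F \ mu m)).Reachable i r := by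
  simp [Rts]

noncomputable def rootOf (F : Finset (Fin m → ℕ)) (i : Fin m) : Fin m :=
  if h : (Rts F i).Nonempty then (Rts F i).min' h else i

lemma rootOf_eq {F : Finset (Fin m → ℕ)} {i : Fin m} (h : (Rts F i).Nonempty) :
    rootOf F i = (Rts F i).min' h := dif_pos h

open Classical in
noncomputable def psi (F : Finset (Fin m → ℕ)) : Fin m → Fin m := fun i =>
  if Pi.single i 2 ∈ F \ mu m then i
  else if h2 : ∃ j, (skGraph (F \ mu m)).Adj i j ∧
      (skGraph (F \ mu m)).dist j (rootOf F i) + 1 = (skGraph (F \ mu m)).dist i (rootOf F i)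
    then Classical.choose h2 else i

lemma psi_loop {F : Finset (Fin m → ℕ)} {i : Fin m} (h : Pi.single i 2 ∈ F \ mu m) :
    psi F i = i := by
  unfold psi
  rw [if_pos h]

def gfun (f : Fin m → Fin m) : Fin m → (Fin m → ℕ) := fun i =>
  if f i = i then Pi.single i 2 else Pi.single i 1 + Pi.single (f i) 1

def phi (f : Fin m → Fin m) : Finset (Fin m → ℕ) :=
  mu m ∪ Finset.univ.image (gfun f)

end graph


section psiphi
variable {m : ℕ} {F : Finset (Fin m → ℕ)}

lemma Rts_nonempty (hF : IsFerrers F)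
    (hS2 : ∀ i : Fin m, ∃ r, Relation.EqvGen (Touches (F \ mu m)) i r ∧
      Pi.single r 2 ∈ F \ mu m) (i : Fin m) : (Rts F i).Nonempty := by
  obtain ⟨r, h1, h2⟩ := hS2 i
  exact ⟨r, mem_Rts.mpr ⟨h2, reach_of_eqvgen hF h1⟩⟩

lemma min'_congr_ext {s t : Finset (Fin m)} (hs : s.Nonempty) (ht : t.Nonempty)
    (h : s = t) : s.min' hs = t.min' ht := by
  subst h; rfl

lemma rootOf_mem (hF : IsFerrers F)
    (hS2 : ∀ i : Fin m, ∃ r, Relation.EqvGen (Touches (F \ mu m)) i r ∧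
      Pi.single r 2 ∈ F \ mu m) (i : Fin m) : rootOf F i ∈ Rts F i := by
  rw [rootOf_eq (Rts_nonempty hF hS2 i)]
  exact Finset.min'_mem _ _

lemma rootOf_adj (hF : IsFerrers F)
    (hS2 : ∀ i : Fin m, ∃ r, Relation.EqvGen (Touches (F \ mu m)) i r ∧
      Pi.single r 2 ∈ F \ mu m) {i j : Fin m} (h : (skGraph (F \ mu m)).Adj i j) :
    rootOf F i = rootOf F j := by
  have hset : Rts F i = Rts F j := by
    ext r
    rw [mem_Rts, mem_Rts]
    constructor
    · rintro ⟨h1, h2⟩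
      exact ⟨h1, (h.symm.reachable).trans h2⟩
    · rintro ⟨h1, h2⟩
      exact ⟨h1, (h.reachable).trans h2⟩
  rw [rootOf_eq (Rts_nonempty hF hS2 i), rootOf_eq (Rts_nonempty hF hS2 j)]
  exact min'_congr_ext _ _ hset

lemma psi_desc (hF : IsFerrers F)
    (hS2 : ∀ i : Fin m, ∃ r, Relation.EqvGen (Touches (F \ mu m)) i r ∧
      Pi.single r 2 ∈ F \ mu m) {i : Fin m} (h : Pi.single i 2 ∉ F \ mu m) :
    (skGraph (F \ mu m)).Adj i (psi F i) ∧
      (skGraph (F \ mu m)).dist (psi F i) (rootOf F i) + 1 =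
        (skGraph (F \ mu m)).dist i (rootOf F i) := by
  have hroot := rootOf_mem hF hS2 i
  rw [mem_Rts] at hroot
  have hne : i ≠ rootOf F i := by
    intro he
    rw [← he] at hroot
    exact h hroot.1
  have hex : ∃ j, (skGraph (F \ mu m)).Adj i j ∧
      (skGraph (F \ mu m)).dist j (rootOf F i) + 1 =
        (skGraph (F \ mu m)).dist i (rootOf F i) :=
    exists_desc _ hne hroot.2
  have hpsi : psi F i = Classical.choose hex := by
    unfold psi
    rw [if_neg h, dif_pos hex]
  rw [hpsi]
  exact Classical.choose_spec hex

lemma psi_ne (hF : IsFerrers F)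
    (hS2 : ∀ i : Fin m, ∃ r, Relation.EqvGen (Touches (F \ mu m)) i r ∧
      Pi.single r 2 ∈ F \ mu m) {i : Fin m} (h : Pi.single i 2 ∉ F \ mu m) :
    psi F i ≠ i :=
  Ne.symm (psi_desc hF hS2 h).1.ne

lemma psi_fx (hF : IsFerrers F)
    (hS2 : ∀ i : Fin m, ∃ r, Relation.EqvGen (Touches (F \ mu m)) i r ∧
      Pi.single r 2 ∈ F \ mu m) :
    Fx (psi F) = Finset.univ.filter (fun i => Pi.single i 2 ∈ F \ mu m) := by
  classical
  ext i
  rw [mem_Fx, Finset.mem_filter]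
  constructor
  · intro h
    by_contra hc
    simp only [Finset.mem_univ, true_and] at hc
    exact psi_ne hF hS2 hc h
  · intro h
    exact psi_loop h.2

lemma psi_evfix (hF : IsFerrers F)
    (hS2 : ∀ i : Fin m, ∃ r, Relation.EqvGen (Touches (F \ mu m)) i r ∧
      Pi.single r 2 ∈ F \ mu m) : EvFix (psi F) := by
  suffices h : ∀ d (i : Fin m), (skGraph (F \ mu m)).dist i (rootOf F i) ≤ d →
      ∃ k, (psi F)^[k+1] i = (psi F)^[k] i by
    exact fun i => h _ i le_rfl
  intro d
  induction d with
  | zero =>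
    intro i hd
    by_cases hl : Pi.single i 2 ∈ F \ mu m
    · exact ⟨0, by simp [psi_loop hl]⟩
    · exfalso
      have := (psi_desc hF hS2 hl).2
      omega
  | succ d ih =>
    intro i hd
    by_cases hl : Pi.single i 2 ∈ F \ mu m
    · exact ⟨0, by simp [psi_loop hl]⟩
    · obtain ⟨hadj, hdist⟩ := psi_desc hF hS2 hl
      have hroot : rootOf F (psi F i) = rootOf F i := rootOf_adj hF hS2 hadj.symm
      have hled : (skGraph (F \ mu m)).dist (psi F i) (rootOf F (psi F i)) ≤ d := by
        rw [hroot]; omega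
      obtain ⟨k, hk⟩ := ih (psi F i) hled
      refine ⟨k+1, ?_⟩
      rw [Function.iterate_succ_apply (psi F) (k+1) i, Function.iterate_succ_apply (psi F) k i]
      exact hk

lemma lev_gfun (f : Fin m → Fin m) (i : Fin m) : lev (gfun f i) = 2 := by
  unfold gfun
  split
  · simp
  · rename_i h
    rw [lev_add]
    simp

lemma gfun_not_mu (f : Fin m → Fin m) (i : Fin m) : gfun f i ∉ mu m := by
  rw [mem_mu_iff, lev_gfun]
  omega

lemma phi_sdiff (f : Fin m → Fin m) : phi f \ mu m = Finset.univ.image (gfun f) := by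
  unfold phi
  rw [Finset.union_sdiff_cancel_left ?hdisj]
  case hdisj =>
    rw [Finset.disjoint_left]
    intro a ha hb
    obtain ⟨i, _, rfl⟩ := Finset.mem_image.mp hb
    exact gfun_not_mu f i ha

lemma evfix_no_two_cycle {f : Fin m → Fin m} (hf : EvFix f) {i : Fin m}
    (h : f (f i) = i) : f i = i := by
  have h2 : f^[0 + 2] i = f^[0] i := by
    simpa [Function.iterate_succ_apply'] using h
  have := periodic_fixed f i (hf i) (a := 0) (d := 2) (by omega) h2
  simpa using this

lemma gfun_inj {f : Fin m → Fin m} (hf : EvFix f) : Function.Injective (gfun f) := by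
  intro i j h
  unfold gfun at h
  by_cases hi : f i = i <;> by_cases hj : f j = j
  · rw [if_pos hi, if_pos hj] at h
    exact single2_inj h
  · rw [if_pos hi, if_neg hj] at h
    exact absurd h.symm (pair_ne_single2 (fun he => hj he.symm))
  · rw [if_neg hi, if_pos hj] at h
    exact absurd h (pair_ne_single2 (fun he => hi he.symm))
  · rw [if_neg hi, if_neg hj] at h
    rcases pair_eq_pair (fun he => hi he.symm) (fun he => hj he.symm) h with
      ⟨h1, _⟩ | ⟨h1, h2⟩
    · exact h1
    · exfalso
      subst h1
      exact hj (evfix_no_two_cycle hf h2)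

lemma card_phi {f : Fin m → Fin m} (hf : EvFix f) : (phi f).card = 2 * m + 1 := by
  unfold phi
  rw [Finset.card_union_of_disjoint, card_mu, Finset.card_image_of_injective _ (gfun_inj hf)]
  · simp
    omega
  · rw [Finset.disjoint_left]
    intro a ha hb
    obtain ⟨i, _, rfl⟩ := Finset.mem_image.mp hb
    exact gfun_not_mu f i ha

theorem phi_psi (hF : IsFerrers F) (hmu : mu m ⊆ F) (hcard : F.card = 2*m+1)
    (hblk : ∀ B : Set (Fin m), IsBlock (F \ mu m) B →
      ∃ a ∈ F \ mu m, SuppIn a B ∧ ¬ IsType1 a) :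
    phi (psi F) = F := by
  obtain ⟨hS1, hS2⟩ := structure_main hF hmu hcard hblk
  have himg : Finset.univ.image (gfun (psi F)) ⊆ F \ mu m := by
    intro a ha
    obtain ⟨i, _, rfl⟩ := Finset.mem_image.mp ha
    unfold gfun
    split
    · rename_i hfix
      have : i ∈ Fx (psi F) := mem_Fx.mpr hfix
      rw [psi_fx hF hS2, Finset.mem_filter] at this
      exact this.2
    · rename_i hfix
      have hl : Pi.single i 2 ∉ F \ mu m := by
        intro hc
        exact hfix (psi_loop hc)
      exact (psi_desc hF hS2 hl).1.2
  have hsub : phi (psi F) ⊆ F := by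
    unfold phi
    apply Finset.union_subset hmu
    exact himg.trans (Finset.sdiff_subset)
  apply Finset.eq_of_subset_of_card_le hsub
  rw [card_phi (psi_evfix hF hS2), hcard]

end psiphi


section phigraph
variable {m : ℕ} {f : Fin m → Fin m}

lemma loop_mem_phi : Pi.single r 2 ∈ phi f \ mu m ↔ f r = r := by
  rw [phi_sdiff, Finset.mem_image]
  constructor
  · rintro ⟨i, _, hi⟩
    unfold gfun at hi
    split at hi
    · rename_i hfix
      rw [single2_inj hi] at hfix
      exact hfix
    · rename_i hfix
      exact absurd hi (pair_ne_single2 (fun he => hfix he.symm))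
  · intro h
    refine ⟨r, Finset.mem_univ r, ?_⟩
    unfold gfun
    rw [if_pos h]

lemma pair_mem_phi {i j : Fin m} (hij : i ≠ j) :
    Pi.single i 1 + Pi.single j 1 ∈ phi f \ mu m ↔ (f i = j ∨ f j = i) := by
  rw [phi_sdiff, Finset.mem_image]
  constructor
  · rintro ⟨l, _, hl⟩
    unfold gfun at hl
    split at hl
    · exact absurd hl.symm (pair_ne_single2 hij)
    · rename_i hfix
      rcases pair_eq_pair (fun he => hfix he.symm) hij hl with ⟨h1, h2⟩ | ⟨h1, h2⟩
      · left; rw [← h1]; exact h2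
      · right; rw [← h1]; exact h2
  · rintro (h | h)
    · refine ⟨i, Finset.mem_univ i, ?_⟩
      unfold gfun
      rw [if_neg (fun he => hij (he.symm.trans h)), h]
    · refine ⟨j, Finset.mem_univ j, ?_⟩
      unfold gfun
      rw [if_neg (fun he => hij (h.symm.trans he)), h, add_comm]

lemma adj_phi {i j : Fin m} :
    (skGraph (phi f \ mu m)).Adj i j ↔ i ≠ j ∧ (f i = j ∨ f j = i) := by
  rw [skGraph_adj]
  constructor
  · rintro ⟨h1, h2⟩
    exact ⟨h1, (pair_mem_phi h1).mp h2⟩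
  · rintro ⟨h1, h2⟩
    exact ⟨h1, (pair_mem_phi h1).mpr h2⟩

lemma adj_phi_rho (hf : EvFix f) {i j : Fin m}
    (h : (skGraph (phi f \ mu m)).Adj i j) : rho f i = rho f j := by
  rcases (adj_phi.mp h).2 with h2 | h2
  · rw [← h2, rho_f hf]
  · rw [← h2, rho_f hf]

lemma reach_rho_phi (hf : EvFix f) (i : Fin m) :
    (skGraph (phi f \ mu m)).Reachable i (rho f i) := by
  suffices hs : ∀ n (i : Fin m), hgt f i ≤ n →
      (skGraph (phi f \ mu m)).Reachable i (rho f i) by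
    exact hs _ i le_rfl
  intro n
  induction n with
  | zero =>
    intro i h
    have h0 : hgt f i = 0 := by omega
    rw [hgt_zero_iff] at h0
    rw [← h0]
  | succ n ih =>
    intro i h
    by_cases hfix : f i = i
    · rw [rho_of_fixed hfix]
    · have hadj : (skGraph (phi f \ mu m)).Adj i (f i) :=
        adj_phi.mpr ⟨fun he => hfix he.symm, Or.inl rfl⟩
      have hr : hgt f (f i) ≤ n := by
        have := hgt_succ hf hfix
        omega
      have := ih (f i) hr
      rw [rho_f hf] at this
      exact hadj.reachable.trans this

lemma reach_phi_rho_eq (hf : EvFix f) {i j : Fin m}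
    (h : (skGraph (phi f \ mu m)).Reachable i j) : rho f i = rho f j := by
  obtain ⟨w⟩ := h
  induction w with
  | nil => rfl
  | cons h p ih => exact (adj_phi_rho hf h).trans ih

lemma walk_hgt (hf : EvFix f) {i j : Fin m} (w : (skGraph (phi f \ mu m)).Walk i j) :
    hgt f i ≤ hgt f j + w.length := by
  induction w with
  | nil => simp
  | @cons a b c h p ih =>
    have hstep : hgt f a ≤ hgt f b + 1 := by
      rcases (adj_phi.mp h).2 with h2 | h2
      · have hfix : f a ≠ a := by
          intro he
          exact (adj_phi.mp h).1 (he.symm.trans h2)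
        rw [hgt_succ hf hfix, h2]
      · have hfix : f b ≠ b := by
          intro he
          exact (adj_phi.mp h).1 (he.symm.trans h2).symm
        have := hgt_succ hf hfix
        rw [h2] at this
        omega
    have hlen : (SimpleGraph.Walk.cons h p).length = p.length + 1 := by simp
    rw [hlen]
    omega

lemma dist_rho_hgt (hf : EvFix f) (i : Fin m) :
    (skGraph (phi f \ mu m)).dist i (rho f i) = hgt f i := by
  have hge : hgt f i ≤ (skGraph (phi f \ mu m)).dist i (rho f i) := by
    obtain ⟨w, hw⟩ := (reach_rho_phi hf i).exists_walk_length_eq_dist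
    have := walk_hgt hf w
    have hz : hgt f (rho f i) = 0 := hgt_zero_iff.mpr (rho_rho hf i).symm
    omega
  have hle : ∀ n (i : Fin m), hgt f i ≤ n →
      (skGraph (phi f \ mu m)).dist i (rho f i) ≤ hgt f i := by
    intro n
    induction n with
    | zero =>
      intro i h
      have h0 : hgt f i = 0 := by omega
      rw [hgt_zero_iff] at h0
      rw [← h0, SimpleGraph.dist_self]
      exact Nat.zero_le _
    | succ n ih =>
      intro i h
      by_cases hfix : f i = i
      · have : rho f i = i := rho_of_fixed hfix
        rw [this, SimpleGraph.dist_self]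
        omega
      · have hadj : (skGraph (phi f \ mu m)).Adj i (f i) :=
          adj_phi.mpr ⟨fun he => hfix he.symm, Or.inl rfl⟩
        have hsucc := hgt_succ hf hfix
        have hrec := ih (f i) (by omega)
        rw [rho_f hf] at hrec
        obtain ⟨w2, hw2⟩ := (by rw [← rho_f hf i]; exact reach_rho_phi hf (f i) :
          (skGraph (phi f \ mu m)).Reachable (f i) (rho f i)).exists_walk_length_eq_dist
        have hd : (skGraph (phi f \ mu m)).dist i (rho f i) ≤ w2.length + 1 := by
          have := SimpleGraph.dist_le (SimpleGraph.Walk.cons hadj w2)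
          simpa using this
        omega
  exact le_antisymm (hle _ i le_rfl) hge

end phigraph


section final
variable {m : ℕ} {f : Fin m → Fin m} {F : Finset (Fin m → ℕ)}

lemma lev_mono {x a : Fin m → ℕ} (h : ∀ i, x i ≤ a i) : lev x ≤ lev a :=
  Finset.sum_le_sum (fun i _ => h i)

lemma phi_ferrers : IsFerrers (phi f) := by
  constructor
  · exact ⟨0, Finset.mem_union_left _ (Finset.mem_insert_self 0 _)⟩
  · intro a ha x hx
    by_cases hxlev : lev x ≤ 1
    · exact Finset.mem_union_left _ (mem_mu_iff.mpr hxlev)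
    · push_neg at hxlev
      rw [phi, Finset.mem_union] at ha
      rcases ha with ha | ha
      · exfalso
        have h1 := mem_mu_iff.mp ha
        have h2 := lev_mono hx
        omega
      · obtain ⟨l, _, rfl⟩ := Finset.mem_image.mp ha
        have hlz : lev (0 : Fin m → ℕ) = 0 := lev_eq_zero_iff.mpr rfl
        unfold gfun at hx
        split at hx
        · rename_i hcond
          rcases le_single2_cases hx with rfl | rfl | rfl
          · omega
          · rw [lev_single] at hxlev; omega
          · refine Finset.mem_union_right _ (Finset.mem_image.mpr ⟨l, Finset.mem_univ l, ?_⟩)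
            unfold gfun
            rw [if_pos hcond]
        · rename_i hcond
          have hlne : l ≠ f l := fun he => hcond he.symm
          rcases le_pair_cases hlne hx with rfl | rfl | rfl | rfl
          · omega
          · rw [lev_single] at hxlev; omega
          · rw [lev_single] at hxlev; omega
          · refine Finset.mem_union_right _ (Finset.mem_image.mpr ⟨l, Finset.mem_univ l, ?_⟩)
            unfold gfun
            rw [if_neg hcond]

lemma phi_blocks (hf : EvFix f) : ∀ B : Set (Fin m), IsBlock (phi f \ mu m) B →
    ∃ a ∈ phi f \ mu m, SuppIn a B ∧ ¬ IsType1 a := by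
  rintro B ⟨i, rfl⟩
  refine ⟨Pi.single (rho f i) 2, loop_mem_phi.mpr (rho_fix hf i), ?_, type2_not_type1⟩
  intro l hl
  have hlr : l = rho f i := by
    by_contra hc
    rw [Pi.single_apply, if_neg hc] at hl
    exact hl rfl
  subst hlr
  exact eqvgen_of_reach (reach_rho_phi hf i)

theorem psi_phi (hf : EvFix f) : psi (phi f) = f := by
  have hS2φ : ∀ i : Fin m, ∃ r, Relation.EqvGen (Touches (phi f \ mu m)) i r ∧
      Pi.single r 2 ∈ phi f \ mu m := by
    intro i
    exact ⟨rho f i, eqvgen_of_reach (reach_rho_phi hf i), loop_mem_phi.mpr (rho_fix hf i)⟩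
  funext i
  by_cases hfix : f i = i
  · rw [psi_loop (loop_mem_phi.mpr hfix), hfix]
  · have hl : Pi.single i 2 ∉ phi f \ mu m := fun hc => hfix (loop_mem_phi.mp hc)
    have hRts : Rts (phi f) i = {rho f i} := by
      ext r
      rw [mem_Rts, Finset.mem_singleton]
      constructor
      · rintro ⟨h1, h2⟩
        have hfr : f r = r := loop_mem_phi.mp h1
        have h3 := reach_phi_rho_eq hf h2
        rw [rho_of_fixed hfr] at h3
        exact h3.symm
      · rintro rfl
        exact ⟨loop_mem_phi.mpr (rho_fix hf i), reach_rho_phi hf i⟩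
    have hne1 : (Rts (phi f) i).Nonempty := by
      rw [hRts]
      exact ⟨_, Finset.mem_singleton_self _⟩
    have hroot : rootOf (phi f) i = rho f i := by
      rw [rootOf_eq hne1, min'_congr_ext hne1 (by simp) hRts, Finset.min'_singleton]
    obtain ⟨hadj, hdist⟩ := psi_desc phi_ferrers hS2φ hl
    rw [hroot] at hdist
    rcases (adj_phi.mp hadj).2 with h2 | h2
    · exact h2.symm
    · exfalso
      have hjfix : f (psi (phi f) i) ≠ psi (phi f) i := by
        intro he
        exact (adj_phi.mp hadj).1 (h2.symm.trans he).symm.symm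
      have hgtj : hgt f (psi (phi f) i) = hgt f i + 1 := by
        rw [hgt_succ hf hjfix, h2]
      have hrhoij : rho f (psi (phi f) i) = rho f i := (adj_phi_rho hf hadj).symm
      have hdj : (skGraph (phi f \ mu m)).dist (psi (phi f) i) (rho f i) =
          hgt f (psi (phi f) i) := by
        rw [← hrhoij]
        exact dist_rho_hgt hf _
      have hdi := dist_rho_hgt hf i
      omega

lemma card_type2_phi (hf : EvFix f) :
    Nat.card {a : Fin m → ℕ // a ∈ phi f \ mu m ∧ IsType2 a} = (Fx f).card := by
  have hbij : Function.Bijective (fun r : {r : Fin m // r ∈ Fx f} =>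
      (⟨Pi.single r.1 2, loop_mem_phi.mpr (mem_Fx.mp r.2), ⟨r.1, rfl⟩⟩ :
        {a : Fin m → ℕ // a ∈ phi f \ mu m ∧ IsType2 a})) := by
    constructor
    · intro r s h
      exact Subtype.ext (single2_inj (congrArg Subtype.val h))
    · rintro ⟨a, ha, r, rfl⟩
      exact ⟨⟨r, mem_Fx.mpr (loop_mem_phi.mp ha)⟩, rfl⟩
  rw [← Nat.card_eq_of_bijective _ hbij, Nat.card_eq_fintype_card, Fintype.card_coe]

lemma card_fx_psi {α : ℕ} (hF : IsFerrers F)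
    (hS2 : ∀ i : Fin m, ∃ r, Relation.EqvGen (Touches (F \ mu m)) i r ∧
      Pi.single r 2 ∈ F \ mu m)
    (hα : Nat.card {a : Fin m → ℕ // a ∈ F \ mu m ∧ IsType2 a} = α) :
    (Fx (psi F)).card = α := by
  classical
  rw [psi_fx hF hS2]
  have hbij : Function.Bijective
      (fun r : {r : Fin m // r ∈ Finset.univ.filter (fun i => Pi.single i 2 ∈ F \ mu m)} =>
      (⟨Pi.single r.1 2, (Finset.mem_filter.mp r.2).2, ⟨r.1, rfl⟩⟩ :
        {a : Fin m → ℕ // a ∈ F \ mu m ∧ IsType2 a})) := by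
    constructor
    · intro r s h
      exact Subtype.ext (single2_inj (congrArg Subtype.val h))
    · rintro ⟨a, ha, r, rfl⟩
      exact ⟨⟨r, Finset.mem_filter.mpr ⟨Finset.mem_univ r, ha⟩⟩, rfl⟩
  calc (Finset.univ.filter (fun i => Pi.single i 2 ∈ F \ mu m)).card
      = Nat.card {r : Fin m // r ∈ Finset.univ.filter (fun i => Pi.single i 2 ∈ F \ mu m)} := by
        rw [Nat.card_eq_fintype_card, Fintype.card_coe]
    _ = Nat.card {a : Fin m → ℕ // a ∈ F \ mu m ∧ IsType2 a} := Nat.card_eq_of_bijective _ hbij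
    _ = α := hα

end final


/-- for `1 ≤ α ≤ m`, the number of Ferrers diagrams `λ ⊆ ℕ^m` with `2m+1`
elements containing `μ_m`, every component of `λ ∖ μ_m` containing a non-type-1 element,
and exactly `α` elements of type 2 in `λ ∖ μ_m`, equals `C(m−1, α−1) · m^(m−α)`. -/
theorem statement15 (m α : ℕ) (hm : 1 ≤ m) (hα : 1 ≤ α) (hαm : α ≤ m) :
    Nat.card {F : Finset (Fin m → ℕ) //
      IsFerrers F ∧ mu m ⊆ F ∧ F.card = 2 * m + 1 ∧
      (∀ B : Set (Fin m), IsBlock (F \ mu m) B →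
        ∃ a ∈ F \ mu m, SuppIn a B ∧ ¬ IsType1 a) ∧
      Nat.card {a : Fin m → ℕ // a ∈ F \ mu m ∧ IsType2 a} = α} =
    Nat.choose (m - 1) (α - 1) * m ^ (m - α) := by
  have E : {F : Finset (Fin m → ℕ) //
      IsFerrers F ∧ mu m ⊆ F ∧ F.card = 2 * m + 1 ∧
      (∀ B : Set (Fin m), IsBlock (F \ mu m) B →
        ∃ a ∈ F \ mu m, SuppIn a B ∧ ¬ IsType1 a) ∧
      Nat.card {a : Fin m → ℕ // a ∈ F \ mu m ∧ IsType2 a} = α} ≃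
      {f : Fin m → Fin m // EvFix f ∧ (Fx f).card = α} :=
    { toFun := fun p =>
        ⟨psi p.1,
          psi_evfix p.2.1 (structure_main p.2.1 p.2.2.1 p.2.2.2.1 p.2.2.2.2.1).2,
          card_fx_psi p.2.1 (structure_main p.2.1 p.2.2.1 p.2.2.2.1 p.2.2.2.2.1).2
            p.2.2.2.2.2⟩
      invFun := fun p =>
        ⟨phi p.1, phi_ferrers, Finset.subset_union_left, card_phi p.2.1,
          phi_blocks p.2.1, by rw [card_type2_phi p.2.1, p.2.2]⟩
      left_inv := fun p =>
        Subtype.ext (phi_psi p.2.1 p.2.2.1 p.2.2.2.1 p.2.2.2.2.1)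
      right_inv := fun p => Subtype.ext (psi_phi p.2.1) }
  rw [Nat.card_congr E]
  exact card_skt m α hα hαm
end
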